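/- arXiv:math/0612756 — 8 statements merged into one kernel-verified Lean document; each statement's English description precedes it below -/
import Mathlib

section
/- Let F be a Hausdorff locally convex topological vector space over ℝ, let (F_i)_{i∈ℕ} be a sequence of Fréchet spaces, and let p_i : F_i → F be continuous linear maps. Let F̃ be a Fréchet space and p : F̃ → F a continuous linear map such that the range of p is contained in the union of the ranges of the p_i. Then there exists an index i such that the range of p is contained in the range of p_i. -/
open Set Filter Topology Uniformity Pointwise
set_option linter.unusedSectionVars false

section OMT

variable {E G : Type*}
  [AddCommGroup E] [Module ℝ E] [UniformSpace E] [IsUniformAddGroup E] [ContinuousSMul ℝ E]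
  [AddCommGroup G] [Module ℝ G] [TopologicalSpace G] [IsTopologicalAddGroup G] [ContinuousSMul ℝ G]

lemma isMeagre_of_interior_closure_empty {s : Set G} (h : interior (closure s) = ∅) :
    IsMeagre s := by
  rw [isMeagre_iff_countable_union_isNowhereDense]
  exact ⟨{s}, by simpa [IsNowhereDense] using h, countable_singleton s, by simp⟩

lemma closure_image_nhds_of_nonmeager (f : E →L[ℝ] G) (hf : ¬ IsMeagre (Set.range f))
    {A : Set E} (hA : A ∈ 𝓝 (0 : E)) : closure (f '' A) ∈ 𝓝 (0 : G) := by
  obtain ⟨V₀, hV₀, hV₀A⟩ := exists_nhds_zero_half hA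
  set V := balancedCore ℝ V₀ with hVdef
  have hV : V ∈ 𝓝 (0 : E) := balancedCore_mem_nhds_zero hV₀
  have hVbal : Balanced ℝ V := balancedCore_balanced _
  have hVA : ∀ a ∈ V, ∀ b ∈ V, a + b ∈ A := fun a ha b hb =>
    hV₀A a (balancedCore_subset _ ha) b (balancedCore_subset _ hb)
  -- covering of the range by scalings of f '' V
  have hcover : Set.range f ⊆ ⋃ n : ℕ, ((n : ℝ) + 1) • (f '' V) := by
    rintro _ ⟨x, rfl⟩
    obtain ⟨r, hr0, hr⟩ := ((absorbent_nhds_zero (𝕜 := ℝ) hV) x).exists_pos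
    obtain ⟨n, hn⟩ := exists_nat_ge r
    have hx : x ∈ ((n : ℝ) + 1) • V := by
      have := hr ((n : ℝ) + 1) (by
        rw [Real.norm_eq_abs, abs_of_nonneg (by positivity)]
        linarith)
      exact this rfl
    refine mem_iUnion.2 ⟨n, ?_⟩
    obtain ⟨v, hv, rfl⟩ := hx
    exact ⟨f v, ⟨v, hv, rfl⟩, (map_smul f _ _).symm⟩
  -- some scaling of f '' V is nonmeager, hence f '' V is nonmeager
  have hnm : ¬ IsMeagre (f '' V) := by
    intro h
    apply hf
    refine IsMeagre.mono hcover (isMeagre_iUnion fun n => ?_)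
    have hne : ((n : ℝ) + 1) ≠ 0 := by positivity
    have : (((n : ℝ) + 1) • (f '' V)) = (fun y : G => ((n : ℝ) + 1)⁻¹ • y) ⁻¹' (f '' V) := by
      ext y
      rw [Set.mem_preimage, mem_smul_set_iff_inv_smul_mem₀ hne]
    rw [this]
    exact h.preimage_of_isOpenMap (continuous_const_smul _)
      (isOpenMap_smul₀ (inv_ne_zero hne)) 
  -- hence the closure of f '' V has nonempty interior
  have hint : (interior (closure (f '' V))).Nonempty := by
    rw [nonempty_iff_ne_empty]
    intro h
    exact hnm (isMeagre_of_interior_closure_empty h)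
  obtain ⟨z, hz⟩ := hint
  have hzC : z ∈ closure (f '' V) := interior_subset hz
  -- translate to get a neighborhood of 0
  have hnhds := (Homeomorph.addLeft (-z)).isOpenMap.image_mem_nhds
    (mem_interior_iff_mem_nhds.1 hz)
  simp only [Homeomorph.coe_addLeft, neg_add_cancel] at hnhds
  refine mem_of_superset hnhds ?_
  rintro _ ⟨c, hc, rfl⟩
  have hcC : c ∈ closure (f '' V) := hc
  -- -z + c belongs to closure (f '' A)
  have hcont : Continuous (fun p : G × G => -p.1 + p.2) := continuous_fst.neg.add continuous_snd
  have hmem : (z, c) ∈ closure ((f '' V) ×ˢ (f '' V)) := by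
    rw [closure_prod_eq]; exact ⟨hzC, hcC⟩
  have hmaps : MapsTo (fun p : G × G => -p.1 + p.2) ((f '' V) ×ˢ (f '' V)) (f '' A) := by
    rintro ⟨u₁, u₂⟩ ⟨⟨v₁, hv₁, rfl⟩, ⟨v₂, hv₂, rfl⟩⟩
    exact ⟨-v₁ + v₂, hVA _ (hVbal.neg_mem_iff.2 hv₁) _ hv₂, by simp⟩
  exact map_mem_closure (f := fun p : G × G => -p.1 + p.2) hcont hmem hmaps

end OMT

section OMT2
variable {E G : Type*}
  [AddCommGroup E] [Module ℝ E] [UniformSpace E] [IsUniformAddGroup E] [ContinuousSMul ℝ E]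
  [AddCommGroup G] [Module ℝ G] [TopologicalSpace G] [IsTopologicalAddGroup G] [ContinuousSMul ℝ G]

theorem surjective_of_nonmeager [CompleteSpace E] [FirstCountableTopology E]
    [FirstCountableTopology G] [T2Space G]
    (f : E →L[ℝ] G) (hf : ¬ IsMeagre (Set.range f)) : Function.Surjective f := by
  obtain ⟨B, hB⟩ := (𝓝 (0 : E)).exists_antitone_basis
  obtain ⟨W, hW, hWbasis⟩ := (closed_nhds_basis (0 : G)).exists_antitone_subbasis
  have hWnhds : ∀ n, (f ⁻¹' W n) ∈ 𝓝 (0 : E) := by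
    intro n
    have h0 : Tendsto f (𝓝 0) (𝓝 0) := by
      have := f.continuous.tendsto 0
      rwa [map_zero] at this
    exact h0 (hW n).1
  have step : ∀ (n : ℕ) (S : Set E), S ∈ 𝓝 0 → ∃ T : Set E, T ∈ 𝓝 0 ∧ Balanced ℝ T ∧
      (∀ a ∈ T, ∀ b ∈ T, a + b ∈ S) ∧ T ⊆ f ⁻¹' (W n) ∧ T ⊆ B n := by
    intro n S hS
    obtain ⟨U', hU', hU'S⟩ := exists_nhds_zero_half hS
    refine ⟨balancedCore ℝ (U' ∩ (f ⁻¹' W n ∩ B n)), balancedCore_mem_nhds_zero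
      (Filter.inter_mem hU' (Filter.inter_mem (hWnhds n) (hB.mem n))),
      balancedCore_balanced _, ?_, ?_, ?_⟩
    · intro a ha b hb
      exact hU'S a (balancedCore_subset _ ha).1 b (balancedCore_subset _ hb).1
    · exact fun a ha => (balancedCore_subset _ ha).2.1
    · exact fun a ha => (balancedCore_subset _ ha).2.2
  choose T hT1 hT2 hT3 hT4 hT5 using step
  let Vaux : ℕ → {S : Set E // S ∈ 𝓝 (0 : E)} := fun n => Nat.rec
    ⟨T 0 univ univ_mem, hT1 0 univ univ_mem⟩
    (fun n p => ⟨T (n+1) p.1 p.2, hT1 (n+1) p.1 p.2⟩) n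
  set V : ℕ → Set E := fun n => (Vaux n).1 with hVdef
  have hV0 : ∀ n, V n ∈ 𝓝 (0 : E) := fun n => (Vaux n).2
  have hVbal : ∀ n, Balanced ℝ (V n) := by
    intro n; cases n with
    | zero => exact hT2 0 univ univ_mem
    | succ n => exact hT2 (n+1) (Vaux n).1 (Vaux n).2
  have hVW : ∀ n, V n ⊆ f ⁻¹' W n := by
    intro n; cases n with
    | zero => exact hT4 0 univ univ_mem
    | succ n => exact hT4 (n+1) (Vaux n).1 (Vaux n).2
  have hVB : ∀ n, V n ⊆ B n := by
    intro n; cases n with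
    | zero => exact hT5 0 univ univ_mem
    | succ n => exact hT5 (n+1) (Vaux n).1 (Vaux n).2
  have hVsum : ∀ n, ∀ a ∈ V (n+1), ∀ b ∈ V (n+1), a + b ∈ V n :=
    fun n => hT3 (n+1) (Vaux n).1 (Vaux n).2
  have hcl : ∀ n, closure (f '' V n) ∈ 𝓝 (0 : G) := fun n =>
    closure_image_nhds_of_nonmeager f hf (hV0 n)
  have key : ∀ n (z : G), z ∈ closure (f '' V n) →
      ∃ x ∈ V n, z - f x ∈ closure (f '' V (n+1)) := by
    intro n z hz
    have htend : Tendsto (fun w : G => z - w) (𝓝 z) (𝓝 0) := by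
      have : Tendsto (fun w : G => z - w) (𝓝 z) (𝓝 (z - z)) :=
        tendsto_const_nhds.sub tendsto_id
      rwa [sub_self] at this
    obtain ⟨w, hw1, hw2⟩ := (mem_closure_iff_nhds.1 hz) _ (htend (hcl (n+1)))
    obtain ⟨x, hx, rfl⟩ := hw2
    exact ⟨x, hx, hw1⟩
  suffices hsub : closure (f '' V 1) ⊆ Set.range f by
    intro y
    have hr : Set.range f ∈ 𝓝 (0 : G) := mem_of_superset (hcl 1) hsub
    obtain ⟨ρ, hρ0, hρ⟩ := ((absorbent_nhds_zero (𝕜 := ℝ) hr) y).exists_pos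
    obtain ⟨n, hn⟩ := exists_nat_ge ρ
    have hy : y ∈ ((n : ℝ) + 1) • Set.range f := hρ ((n : ℝ) + 1)
      (by rw [Real.norm_eq_abs, abs_of_nonneg (by positivity)]; linarith) rfl
    obtain ⟨w, ⟨x, rfl⟩, rfl⟩ := hy
    exact ⟨((n : ℝ) + 1) • x, (map_smul f _ _)⟩
  intro y₀ hy₀
  choose xfun hxV hxcl using key
  let r : (n : ℕ) → {z : G // z ∈ closure (f '' V (n+1))} := fun n => Nat.rec
    ⟨y₀, hy₀⟩ (fun n p => ⟨p.1 - f (xfun (n+1) p.1 p.2), hxcl (n+1) p.1 p.2⟩) n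
  set u : ℕ → E := fun n => xfun (n+1) (r n).1 (r n).2 with hudef
  have hru : ∀ n, (r (n+1)).1 = (r n).1 - f (u n) := fun n => rfl
  have huV : ∀ n, u n ∈ V (n+1) := fun n => hxV (n+1) (r n).1 (r n).2
  set s : ℕ → E := fun n => ∑ k ∈ Finset.range n, u k with hsdef
  have hsum : ∀ d n, (∑ k ∈ Finset.Ico n (n + d), u k) ∈ V n := by
    intro d
    induction d with
    | zero => intro n; simpa using mem_of_mem_nhds (hV0 n)
    | succ d ih =>
      intro n
      have hlt : n < n + (d + 1) := by omega
      rw [Finset.sum_eq_sum_Ico_succ_bot hlt]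
      have heq : n + (d + 1) = (n + 1) + d := by omega
      rw [heq]
      exact hVsum n _ (huV n) _ (ih (n+1))
  have hVnN : ∀ {N : Set E}, N ∈ 𝓝 (0 : E) → ∃ j, ∀ n, j ≤ n → V n ⊆ N := by
    intro N hN
    obtain ⟨j, -, hj⟩ := hB.toHasBasis.mem_iff.1 hN
    exact ⟨j, fun n hn => (hVB n).trans ((hB.antitone hn).trans hj)⟩
  have hdiff : ∀ m n, n ≤ m → s m - s n ∈ V n := by
    intro m n hnm
    obtain ⟨d, rfl⟩ := Nat.exists_eq_add_of_le hnm
    have := hsum d n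
    rwa [Finset.sum_Ico_eq_sub _ (by omega : n ≤ n + d)] at this
  have hcauchy : CauchySeq s := by
    rw [CauchySeq, cauchy_map_iff]
    refine ⟨atTop_neBot, ?_⟩
    rw [prod_atTop_atTop_eq, uniformity_eq_comap_nhds_zero E, tendsto_comap_iff]
    intro N hN
    obtain ⟨j, hj⟩ := hVnN hN
    rw [mem_map, mem_atTop_sets]
    refine ⟨(j, j), fun p hp => ?_⟩
    have h1 : j ≤ p.1 := hp.1
    have h2 : j ≤ p.2 := hp.2
    simp only [Set.mem_preimage, Function.comp_apply]
    rcases le_total p.1 p.2 with h | h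
    · exact hj p.1 h1 (hdiff p.2 p.1 h)
    · have := hdiff p.1 p.2 h
      have hneg := (hVbal p.2).neg_mem_iff.2 this
      rw [neg_sub] at hneg
      exact hj p.2 h2 hneg
  obtain ⟨x, hx⟩ := cauchySeq_tendsto_of_complete hcauchy
  refine ⟨x, ?_⟩
  have hrs : ∀ n, (r n).1 = y₀ - f (s n) := by
    intro n
    induction n with
    | zero => simp [hsdef]; rfl
    | succ n ih =>
      rw [hru n, ih]
      have : s (n + 1) = s n + u n := Finset.sum_range_succ _ _
      rw [this, map_add]
      abel
  have hr0 : Tendsto (fun n => (r n).1) atTop (𝓝 (0 : G)) := by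
    intro N hN
    obtain ⟨j, -, hj⟩ := hWbasis.toHasBasis.mem_iff.1 hN
    rw [mem_map, mem_atTop_sets]
    refine ⟨j, fun n hn => ?_⟩
    have h1 : (r n).1 ∈ W (n + 1) := by
      have himg : f '' V (n+1) ⊆ W (n+1) := by
        rintro _ ⟨v, hv, rfl⟩; exact hVW (n+1) hv
      have := closure_mono himg (r n).2
      rwa [(hW (n+1)).2.closure_eq] at this
    exact hj (hWbasis.antitone (le_trans hn (Nat.le_succ n)) h1)
  have h2 : Tendsto (fun n => f (s n)) atTop (𝓝 y₀) := by
    have : Tendsto (fun n => y₀ - (r n).1) atTop (𝓝 (y₀ - 0)) :=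
      tendsto_const_nhds.sub hr0
    rw [sub_zero] at this
    refine this.congr fun n => ?_
    rw [hrs n]; abel
  have h1 : Tendsto (fun n => f (s n)) atTop (𝓝 (f x)) := (f.continuous.tendsto x).comp hx
  exact (tendsto_nhds_unique h2 h1).symm

end OMT2


set_option synthInstance.maxHeartbeats 1000000 in
/-- **Grothendieck's factorization theorem (range part).**
If `F` is a Hausdorff locally convex space, `(Fi i)` a sequence of Fréchet spaces with
continuous linear maps `p i : Fi i → F`, and `p : Ft → F` a continuous linear map from a
Fréchet space whose range is contained in the union of the ranges of the `p i`, then the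
range of `p` is contained in the range of some single `p i`. -/
theorem grothendieck_range_subset
    (F : Type*) [AddCommGroup F] [Module ℝ F] [TopologicalSpace F] [IsTopologicalAddGroup F]
    [ContinuousSMul ℝ F] [LocallyConvexSpace ℝ F] [T2Space F]
    (Fi : ℕ → Type*) [∀ i, AddCommGroup (Fi i)] [∀ i, Module ℝ (Fi i)]
    [∀ i, UniformSpace (Fi i)] [∀ i, IsUniformAddGroup (Fi i)] [∀ i, ContinuousSMul ℝ (Fi i)]
    [∀ i, LocallyConvexSpace ℝ (Fi i)] [∀ i, T2Space (Fi i)] [∀ i, CompleteSpace (Fi i)]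
    [∀ i, TopologicalSpace.MetrizableSpace (Fi i)]
    (p : ∀ i, Fi i →L[ℝ] F)
    (Ft : Type*) [AddCommGroup Ft] [Module ℝ Ft] [UniformSpace Ft] [IsUniformAddGroup Ft]
    [ContinuousSMul ℝ Ft] [LocallyConvexSpace ℝ Ft] [T2Space Ft] [CompleteSpace Ft]
    [TopologicalSpace.MetrizableSpace Ft]
    (q : Ft →L[ℝ] F)
    (hrange : Set.range q ⊆ ⋃ i, Set.range (p i)) :
    ∃ i, Set.range q ⊆ Set.range (p i) := by
  classical
  have hucg : (𝓤 Ft).IsCountablyGenerated := IsUniformAddGroup.uniformity_countably_generated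
  haveI : BaireSpace Ft := BaireSpace.of_completelyPseudoMetrizable
  set g : ∀ i, (Ft × Fi i) →L[ℝ] F := fun i =>
    q.comp (ContinuousLinearMap.fst ℝ Ft (Fi i)) -
      (p i).comp (ContinuousLinearMap.snd ℝ Ft (Fi i)) with hg
  set K : ∀ i, Submodule ℝ (Ft × Fi i) := fun i => LinearMap.ker (g i : Ft × Fi i →ₗ[ℝ] F) with hK
  have hKclosed : ∀ i, IsClosed (K i : Set (Ft × Fi i)) := fun i =>
    ContinuousLinearMap.isClosed_ker (g i)
  haveI : ∀ i, CompleteSpace (K i) := fun i => (hKclosed i).completeSpace_coe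
  haveI : ∀ i, IsUniformAddGroup (K i) := fun i => (K i).toAddSubgroup.isUniformAddGroup
  haveI : ∀ i, ContinuousSMul ℝ (K i) := fun i => inferInstance
  haveI hfc : ∀ i, FirstCountableTopology (K i) := fun i => by
    haveI h1 : TopologicalSpace.PseudoMetrizableSpace (Ft × Fi i) := inferInstance
    haveI h2 : FirstCountableTopology (Ft × Fi i) :=
      TopologicalSpace.PseudoMetrizableSpace.firstCountableTopology
    exact IsInducing.subtypeVal.firstCountableTopology
  set π : ∀ i, (K i) →L[ℝ] Ft := fun i =>
    (ContinuousLinearMap.fst ℝ Ft (Fi i)).comp (K i).subtypeL with hπ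
  have hcover : (⋃ i, Set.range (π i)) = univ := by
    rw [eq_univ_iff_forall]
    intro x
    obtain ⟨_, ⟨i, rfl⟩, y, hy⟩ := hrange ⟨x, rfl⟩
    have hmem : (x, y) ∈ K i := by
      simp [hK, hg, LinearMap.mem_ker, ContinuousLinearMap.sub_apply, hy]
    exact mem_iUnion.2 ⟨i, ⟨⟨(x, y), hmem⟩, rfl⟩⟩
  have hnm : ∃ i, ¬ IsMeagre (Set.range (π i)) := by
    by_contra h
    push_neg at h
    have : IsMeagre (univ : Set Ft) := by
      rw [← hcover]; exact isMeagre_iUnion h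
    have hd : Dense ((univ : Set Ft)ᶜ) := dense_of_mem_residual this
    rw [compl_univ] at hd
    have h0 : (0 : Ft) ∈ closure (∅ : Set Ft) := hd 0
    rw [closure_empty] at h0
    exact h0
  obtain ⟨i, hi⟩ := hnm
  have hsurj : Function.Surjective (π i) := surjective_of_nonmeager (π i) hi
  refine ⟨i, ?_⟩
  rintro _ ⟨x, rfl⟩
  obtain ⟨⟨⟨x', y⟩, hmem⟩, hx⟩ := hsurj x
  have hx' : x' = x := hx
  subst hx'
  have hpy : q x' - p i y = 0 := by
    have := hmem
    simpa [hK, hg, LinearMap.mem_ker, ContinuousLinearMap.sub_apply] using this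
  exact ⟨y, by rw [← sub_eq_zero]; simpa using (neg_eq_zero.2 hpy ▸ (neg_sub (q x') (p i y)).symm ▸ rfl)⟩
end

section
/- Let F be a Hausdorff locally convex topological vector space over ℝ, let E be a Fréchet space and q : E → F an injective continuous linear map, let F̃ be a Fréchet space and p : F̃ → F a continuous linear map whose range is contained in the range of q. Then there exists a continuous linear map p̃ : F̃ → E such that p = q ∘ p̃. -/
open Set Filter Topology Pointwise Uniformity

/-- Recursive construction helper. -/
lemma gf_exists_seq_nat_rec {α : Type*} {P : ℕ → α → Prop} {R : ℕ → α → α → Prop} (z : α)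
    (hz : P 0 z) (H : ∀ n a, P n a → ∃ b, P (n + 1) b ∧ R n a b) :
    ∃ u : ℕ → α, u 0 = z ∧ (∀ n, P n (u n)) ∧ ∀ n, R n (u n) (u (n + 1)) := by
  choose! g hg1 hg2 using H
  have hP : ∀ n, P n (Nat.rec z (fun n a => g n a) n) := by
    intro n
    induction n with
    | zero => exact hz
    | succ n ih => exact hg1 n _ ih
  exact ⟨fun n => Nat.rec z (fun n a => g n a) n, rfl, hP, fun n => hg2 n _ (hP n)⟩

/-- Differences of points in closures lie in the closure of the set of differences. -/
lemma gf_sub_mem_closure {Y : Type*} [AddCommGroup Y] [TopologicalSpace Y]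
    [IsTopologicalAddGroup Y] {A B : Set Y} {a b : Y} (ha : a ∈ closure A) (hb : b ∈ closure B) :
    a - b ∈ closure (A - B) := by
  have h1 : (a, b) ∈ closure (A ×ˢ B) := by
    rw [closure_prod_eq]; exact ⟨ha, hb⟩
  have h2 : a - b ∈ (fun p : Y × Y => p.1 - p.2) '' closure (A ×ˢ B) :=
    ⟨(a, b), h1, rfl⟩
  have h3 := image_closure_subset_closure_image
    (f := fun p : Y × Y => p.1 - p.2) (s := A ×ˢ B) (continuous_fst.sub continuous_snd)
  have h4 : (fun p : Y × Y => p.1 - p.2) '' (A ×ˢ B) = A - B := by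
    rw [Set.image_prod]; exact Set.image2_sub
  rw [h4] at h3
  exact h3 h2

/-- Step A of the open mapping theorem: the closure of the image of a neighborhood of zero
under a surjective linear map into a Baire TVS is a neighborhood of zero. -/
lemma gf_closure_image_mem_nhds {X Y : Type*}
    [AddCommGroup X] [Module ℝ X] [TopologicalSpace X] [IsTopologicalAddGroup X]
    [ContinuousSMul ℝ X]
    [AddCommGroup Y] [Module ℝ Y] [TopologicalSpace Y] [IsTopologicalAddGroup Y]
    [ContinuousSMul ℝ Y] [BaireSpace Y]
    (f : X →ₗ[ℝ] Y) (hsurj : Function.Surjective f)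
    {U : Set X} (hU : U ∈ 𝓝 (0 : X)) : closure (f '' U) ∈ 𝓝 (0 : Y) := by
  obtain ⟨V', hV', hV'U⟩ := exists_nhds_zero_half hU
  have hnegV' : (-V' : Set X) ∈ 𝓝 (0 : X) := by
    have h := (continuous_neg (G := X)).continuousAt (x := (0 : X)) |>.preimage_mem_nhds
      (by simpa using hV')
    have : (fun x : X => -x) ⁻¹' V' = -V' := by
      ext x; simp [Set.mem_neg]
    rwa [this] at h
  set V : Set X := V' ∩ (-V') with hVdef
  have hV : V ∈ 𝓝 (0 : X) := Filter.inter_mem hV' hnegV'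
  have hVU : V - V ⊆ U := by
    rintro u ⟨v, hv, w, hw, rfl⟩
    have h2 : -w ∈ V' := hw.2
    have := hV'U v hv.1 (-w) h2
    simpa [sub_eq_add_neg] using this
  set C : Set Y := closure (f '' V) with hC
  -- Baire covering
  have hcover : (⋃ n : ℕ, (((n : ℝ) + 1) • C)) = univ := by
    apply eq_univ_of_forall
    intro y
    obtain ⟨x, rfl⟩ := hsurj y
    obtain ⟨r, hr⟩ := absorbs_iff_norm.1 (absorbent_nhds_zero (𝕜 := ℝ) hV x)
    obtain ⟨n, hn⟩ := exists_nat_ge r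
    have hx : x ∈ ((n : ℝ) + 1) • V :=
      hr ((n : ℝ) + 1) (by rw [Real.norm_eq_abs]; calc r ≤ (n : ℝ) + 1 := by linarith
                _ ≤ |(n : ℝ) + 1| := le_abs_self _) rfl
    obtain ⟨v, hv, rfl⟩ := hx
    refine mem_iUnion.2 ⟨n, ?_⟩
    rw [map_smul]
    exact Set.smul_mem_smul_set (subset_closure ⟨v, hv, rfl⟩)
  have hclosed : ∀ n : ℕ, IsClosed (((n : ℝ) + 1) • C) := fun n =>
    isClosed_closure.smul_of_ne_zero (by positivity)
  have : Nonempty Y := ⟨0⟩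
  obtain ⟨n, y₀, hy₀⟩ := nonempty_interior_of_iUnion_of_closed hclosed hcover
  rw [interior_smul₀ (show ((n : ℝ) + 1) ≠ 0 by positivity)] at hy₀
  obtain ⟨z, hz, -⟩ := hy₀
  -- translate the interior point to 0
  have hopen : IsOpen ((fun w => w + -z) '' interior C) :=
    isOpenMap_add_right (-z) _ isOpen_interior
  have h0mem : (0 : Y) ∈ (fun w => w + -z) '' interior C := ⟨z, hz, by simp⟩
  refine Filter.mem_of_superset (hopen.mem_nhds h0mem) ?_
  rintro u ⟨w, hw, rfl⟩
  have hsub : w - z ∈ closure (f '' V - f '' V) :=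
    gf_sub_mem_closure (interior_subset hw) (interior_subset hz)
  show w + -z ∈ closure (f '' U)
  rw [← sub_eq_add_neg]
  refine closure_mono ?_ hsub
  rw [← Set.image_sub]
  exact Set.image_mono hVU

/-- **Open mapping theorem** for linear maps between complete first-countable topological
vector spaces (in particular, Fréchet spaces): a continuous surjective linear map sends
neighborhoods of zero to neighborhoods of zero. -/
lemma gf_open_mapping {X Y : Type*}
    [AddCommGroup X] [Module ℝ X] [UniformSpace X] [IsUniformAddGroup X]
    [ContinuousSMul ℝ X] [CompleteSpace X] [FirstCountableTopology X]
    [AddCommGroup Y] [Module ℝ Y] [TopologicalSpace Y] [IsTopologicalAddGroup Y]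
    [ContinuousSMul ℝ Y] [BaireSpace Y] [T2Space Y] [FirstCountableTopology Y]
    (f : X →ₗ[ℝ] Y) (hf : Continuous f) (hsurj : Function.Surjective f)
    {U : Set X} (hU : U ∈ 𝓝 (0 : X)) : f '' U ∈ 𝓝 (0 : Y) := by
  obtain ⟨b, hb⟩ := (𝓝 (0 : X)).exists_antitone_basis
  obtain ⟨w, hw⟩ := (𝓝 (0 : Y)).exists_antitone_basis
  -- a sequence of small closed neighborhoods of 0 in X
  have step : ∀ (n : ℕ) (S : Set X), (S ∈ 𝓝 (0 : X) ∧ IsClosed S ∧ S ⊆ b n) →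
      ∃ T : Set X, (T ∈ 𝓝 (0 : X) ∧ IsClosed T ∧ T ⊆ b (n + 1)) ∧ T + T ⊆ S := by
    intro n S hS
    obtain ⟨H, hH, hHS⟩ := exists_nhds_zero_half hS.1
    obtain ⟨T, ⟨hT₁, hT₂⟩, hT₃⟩ := (closed_nhds_basis (0 : X)).mem_iff.1
      (Filter.inter_mem hH (hb.1.mem_of_mem (i := n + 1) trivial))
    refine ⟨T, ⟨hT₁, hT₂, fun x hx => (hT₃ hx).2⟩, ?_⟩
    exact Set.add_subset_iff.2 fun x hx y hy => hHS x (hT₃ hx).1 y (hT₃ hy).1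
  obtain ⟨Z, ⟨hZ₁, hZ₂⟩, hZ₃⟩ := (closed_nhds_basis (0 : X)).mem_iff.1
    (Filter.inter_mem hU (hb.1.mem_of_mem (i := 0) trivial))
  obtain ⟨V, hV0, hVP, hVR⟩ := gf_exists_seq_nat_rec (P := fun n S =>
      S ∈ 𝓝 (0 : X) ∧ IsClosed S ∧ S ⊆ b n) (R := fun n S T => T + T ⊆ S)
    Z ⟨hZ₁, hZ₂, fun x hx => (hZ₃ hx).2⟩ step
  have hVnhds : ∀ n, V n ∈ 𝓝 (0 : X) := fun n => (hVP n).1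
  have hVclosed : ∀ n, IsClosed (V n) := fun n => (hVP n).2.1
  have hVb : ∀ n, V n ⊆ b n := fun n => (hVP n).2.2
  have hVmono : ∀ n, V (n + 1) ⊆ V n := fun n x hx => by
    have := hVR n (Set.add_mem_add hx (mem_of_mem_nhds (hVnhds (n + 1))))
    simpa using this
  have hVmono' : ∀ m n, n ≤ m → V m ⊆ V n := by
    intro m n h
    induction h with
    | refl => exact subset_rfl
    | step _ ih => exact (hVmono _).trans ih
  have hVU : V 0 ⊆ U := hV0 ▸ fun x hx => (hZ₃ hx).1
  -- the key inclusion: closure (f '' V 1) ⊆ f '' U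
  refine Filter.mem_of_superset (gf_closure_image_mem_nhds f hsurj (hVnhds 1)) ?_
  intro y hy
  -- construct the approximating sequence of partial sums
  have key : ∀ (n : ℕ) (t : X), y - f t ∈ closure (f '' V (n + 1)) →
      ∃ t' : X, (y - f t' ∈ closure (f '' V (n + 2))) ∧
        (t' - t ∈ V (n + 1) ∧ y - f t' ∈ w n) := by
    intro n t ht
    have hN : closure (f '' V (n + 2)) ∩ w n ∈ 𝓝 (0 : Y) :=
      Filter.inter_mem (gf_closure_image_mem_nhds f hsurj (hVnhds (n + 2)))
        (hw.1.mem_of_mem trivial)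
    -- the set (y - f t) - N is a neighborhood of y - f t
    have hnbhd : (fun u => y - f t - u) '' (closure (f '' V (n + 2)) ∩ w n) ∈ 𝓝 (y - f t) := by
      have hmap : IsOpenMap (fun u : Y => y - f t - u) := by
        have : (fun u : Y => y - f t - u) = (fun u : Y => u + (y - f t)) ∘ (fun u : Y => -u) := by
          funext u; simp [sub_eq_add_neg, add_comm]
        rw [this]
        exact (isOpenMap_add_right (y - f t)).comp (Homeomorph.neg Y).isOpenMap
      obtain ⟨N', hN'o, hN'0, hN'⟩ := mem_nhds_iff.1 hN
      refine mem_nhds_iff.2 ⟨(fun u => y - f t - u) '' N', ?_, hmap _ hN'0, ⟨0, hN', by simp⟩⟩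
      exact Set.image_mono hN'o
    obtain ⟨u, hu⟩ := mem_closure_iff_nhds.1 ht _ hnbhd
    obtain ⟨⟨s, hs, hsu⟩, v, hv, hfv⟩ := hu
    refine ⟨t + v, ?_, ?_, ?_⟩
    · have : y - f (t + v) = s := by
        have : y - f t - s = f v := hfv ▸ hsu ▸ rfl
        have h2 : s = y - f t - f v := by rw [← this]; abel
        rw [h2, map_add]; abel
      rw [this]; exact hs.1
    · simpa using hv
    · have : y - f (t + v) = s := by
        have : y - f t - s = f v := hfv ▸ hsu ▸ rfl
        have h2 : s = y - f t - f v := by rw [← this]; abel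
        rw [h2, map_add]; abel
      rw [this]; exact hs.2
  obtain ⟨T, hT0, hTP, hTR⟩ := gf_exists_seq_nat_rec (P := fun n t =>
      y - f t ∈ closure (f '' V (n + 1)))
    (R := fun n t t' => t' - t ∈ V (n + 1) ∧ y - f t' ∈ w n)
    (0 : X) (by simpa using hy) key
  have hTdiff : ∀ n, T (n + 1) - T n ∈ V (n + 1) := fun n => (hTR n).1
  have hTw : ∀ n, y - f (T (n + 1)) ∈ w n := fun n => (hTR n).2
  -- telescoping differences remain small
  have hdiff : ∀ (d n : ℕ), T (n + d + 1) - T n ∈ V n := by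
    intro d
    induction d with
    | zero => exact fun n => hVmono n (hTdiff n)
    | succ d ih =>
      intro n
      have h1 : T (n + 1 + d + 1) - T (n + 1) ∈ V (n + 1) := ih (n + 1)
      have h2 : T (n + 1) - T n ∈ V (n + 1) := hTdiff n
      have h3 := hVR n (Set.add_mem_add h1 h2)
      rw [sub_add_sub_cancel] at h3
      have heq : n + 1 + d + 1 = n + (d + 1) + 1 := by omega
      rwa [heq] at h3
  -- the partial sums form a Cauchy sequence
  have hcauchy : CauchySeq T := by
    rw [cauchySeq_iff]
    intro W hW
    rw [uniformity_eq_comap_nhds_zero X] at hW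
    obtain ⟨W', hW', hW'W⟩ := hW
    have hnegW' : (fun x : X => -x) ⁻¹' W' ∈ 𝓝 (0 : X) :=
      (continuous_neg (G := X)).continuousAt (x := (0 : X)) |>.preimage_mem_nhds
        (by simpa using hW')
    obtain ⟨N, -, hN⟩ := hb.1.mem_iff.1 (Filter.inter_mem hW' hnegW')
    refine ⟨N + 1, fun k hk l hl => ?_⟩
    apply hW'W
    show T l - T k ∈ W'
    rcases lt_trichotomy k l with h | h | h
    · have : T l - T k ∈ V k := by
        have := hdiff (l - k - 1) k
        have heq : k + (l - k - 1) + 1 = l := by omega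
        rwa [heq] at this
      exact (hN (hb.2 (Nat.le_succ N) (hVb (N + 1) ((hVmono' k (N + 1) hk) this)))).1
    · simp [h, mem_of_mem_nhds hW']
    · have : T k - T l ∈ V l := by
        have := hdiff (k - l - 1) l
        have heq : l + (k - l - 1) + 1 = k := by omega
        rwa [heq] at this
      have h2 := (hN (hb.2 (Nat.le_succ N) (hVb (N + 1) ((hVmono' l (N + 1) hl) this)))).2
      simpa using h2
  obtain ⟨x, hx⟩ := cauchySeq_tendsto_of_complete hcauchy
  -- the limit lies in U
  have hxU : x ∈ U := by
    have hmem : ∀ n : ℕ, 1 ≤ n → T n ∈ V 0 := by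
      intro n hn
      have := hdiff (n - 1) 0
      have heq : 0 + (n - 1) + 1 = n := by omega
      rw [heq] at this
      simpa [hT0] using this
    have : x ∈ closure (V 0) :=
      mem_closure_of_tendsto hx (Filter.eventually_atTop.2 ⟨1, hmem⟩)
    rw [(hVclosed 0).closure_eq] at this
    exact hVU this
  -- f x = y
  have hfy : Filter.Tendsto (fun n => f (T n)) atTop (𝓝 y) := by
    have hs : Filter.Tendsto (fun n => y - f (T n)) atTop (𝓝 (0 : Y)) := by
      rw [hw.1.tendsto_right_iff]
      intro i _
      refine Filter.eventually_atTop.2 ⟨i + 1, fun n hn => ?_⟩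
      obtain ⟨m, rfl⟩ : ∃ m, n = m + 1 := ⟨n - 1, by omega⟩
      exact hw.2 (by omega) (hTw m)
    have := tendsto_const_nhds (x := y) (f := atTop (α := ℕ)) |>.sub hs
    simpa using this
  have hfx : Filter.Tendsto (fun n => f (T n)) atTop (𝓝 (f x)) :=
    (hf.continuousAt.tendsto).comp hx
  exact ⟨x, hxU, tendsto_nhds_unique hfx hfy⟩

set_option synthInstance.maxHeartbeats 1000000 in
set_option maxHeartbeats 1000000 in
/-- **Grothendieck's factorization theorem (factorization part).**
If `F` is a Hausdorff locally convex space, `E` a Fréchet space with an injective continuous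
linear map `q : E → F`, and `p : Ft → F` a continuous linear map from a Fréchet space `Ft`
whose range is contained in the range of `q`, then `p` factors as `q ∘ p̃` for some
continuous linear map `p̃ : Ft → E`. -/
theorem grothendieck_factorization
    (F : Type*) [AddCommGroup F] [Module ℝ F] [TopologicalSpace F] [IsTopologicalAddGroup F]
    [ContinuousSMul ℝ F] [LocallyConvexSpace ℝ F] [T2Space F]
    (E : Type*) [AddCommGroup E] [Module ℝ E] [UniformSpace E] [IsUniformAddGroup E]
    [ContinuousSMul ℝ E] [LocallyConvexSpace ℝ E] [T2Space E] [CompleteSpace E]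
    [TopologicalSpace.MetrizableSpace E]
    (q : E →L[ℝ] F) (hq : Function.Injective q)
    (Ft : Type*) [AddCommGroup Ft] [Module ℝ Ft] [UniformSpace Ft] [IsUniformAddGroup Ft]
    [ContinuousSMul ℝ Ft] [LocallyConvexSpace ℝ Ft] [T2Space Ft] [CompleteSpace Ft]
    [TopologicalSpace.MetrizableSpace Ft]
    (p : Ft →L[ℝ] F)
    (hrange : Set.range p ⊆ Set.range q) :
    ∃ pt : Ft →L[ℝ] E, ∀ x, q (pt x) = p x := by
  classical
  -- the graph-like closed submodule of `Ft × E`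
  set h : Ft × E →L[ℝ] F :=
    p.comp (ContinuousLinearMap.fst ℝ Ft E) - q.comp (ContinuousLinearMap.snd ℝ Ft E) with hh
  have happ : ∀ v : Ft × E, h v = p v.1 - q v.2 := fun v => rfl
  set G : Submodule ℝ (Ft × E) := LinearMap.ker (h : Ft × E →ₗ[ℝ] F) with hG
  have hGc : IsClosed (G : Set (Ft × E)) := ContinuousLinearMap.isClosed_ker h
  haveI : CompleteSpace G := hGc.completeSpace_coe
  haveI : IsUniformAddGroup G :=
    IsUniformAddGroup.comap (G.subtype.toAddMonoidHom)
  haveI : (𝓤 Ft).IsCountablyGenerated := by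
    rw [uniformity_eq_comap_nhds_zero Ft]
    infer_instance
  haveI : FirstCountableTopology (Ft × E) := by infer_instance
  haveI : FirstCountableTopology G := ⟨fun a => by rw [nhds_induced]; infer_instance⟩
  -- the projection from the graph to `Ft`
  set π : G →ₗ[ℝ] Ft := (LinearMap.fst ℝ Ft E).comp G.subtype with hπ
  have hπapp : ∀ g : G, π g = (g : Ft × E).1 := fun g => rfl
  have hπcont : Continuous π := continuous_fst.comp continuous_subtype_val
  have hπbij : Function.Bijective π := by
    constructor
    · intro a b hab
      have ha : h (a : Ft × E) = 0 := a.2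
      have hb : h (b : Ft × E) = 0 := b.2
      rw [happ, sub_eq_zero] at ha hb
      have h1 : (a : Ft × E).1 = (b : Ft × E).1 := hab
      have h2 : q (a : Ft × E).2 = q (b : Ft × E).2 := by rw [← ha, ← hb, h1]
      have h3 : (a : Ft × E).2 = (b : Ft × E).2 := hq h2
      exact Subtype.ext (Prod.ext h1 h3)
    · intro y
      obtain ⟨x, hx⟩ := hrange ⟨y, rfl⟩
      refine ⟨⟨(y, x), ?_⟩, rfl⟩
      show h (y, x) = 0
      rw [happ, sub_eq_zero]
      exact hx.symm
  -- the inverse is continuous by the open mapping theorem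
  set e : G ≃ₗ[ℝ] Ft := LinearEquiv.ofBijective π hπbij with he
  have heπ : ∀ g : G, e.symm (π g) = g := fun g => e.symm_apply_apply g
  have hπe : ∀ x : Ft, π (e.symm x) = x := fun x => e.apply_symm_apply x
  have hρ : ContinuousAt e.symm 0 := by
    rw [ContinuousAt, map_zero]
    intro U hU
    rw [Filter.mem_map]
    have himg : (⇑e.symm) ⁻¹' U = π '' U := by
      ext x
      constructor
      · intro hx
        exact ⟨e.symm x, hx, hπe x⟩
      · rintro ⟨g, hg, rfl⟩
        rwa [Set.mem_preimage, heπ g]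
    rw [himg]
    exact gf_open_mapping π hπcont hπbij.2 hU
  have hρcont : Continuous e.symm := by
    have := continuous_of_continuousAt_zero (e.symm.toLinearMap.toAddMonoidHom) hρ
    exact this
  -- assemble the factoring map
  refine ⟨{ toLinearMap := (LinearMap.snd ℝ Ft E).comp (G.subtype.comp e.symm.toLinearMap),
            cont := continuous_snd.comp (continuous_subtype_val.comp hρcont) }, ?_⟩
  intro x
  set g : G := e.symm x with hg
  have hker : h (g : Ft × E) = 0 := g.2
  rw [happ, sub_eq_zero] at hker
  have h1 : (g : Ft × E).1 = x := hπe x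
  show q (g : Ft × E).2 = p x
  rw [← hker, h1]
end

section
/- Let F be a Hausdorff locally convex topological vector space over ℝ and let (G_i)_{i∈ℕ} be a countable family of Fréchet subspaces of F whose union (as sets) is all of F. Then for every Fréchet subspace G̃ of F there exists an index i such that G̃ ⊆ G_i (as sets) and the inclusion map G̃ → G_i is continuous. -/
open Filter Set Topology
open scoped Uniformity Pointwise

section Aux

/-- A complete uniform space with countably generated uniformity is a Baire space. -/
theorem myBaireSpace {X : Type*} [u : UniformSpace X] [(𝓤 X).IsCountablyGenerated]
    [CompleteSpace X] : BaireSpace X := by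
  obtain ⟨m, hm⟩ := UniformSpace.metrizable_uniformity X
  subst hm
  letI := m
  exact BaireSpace.of_completelyPseudoMetrizable

variable {E : Type*} [AddCommGroup E] [Module ℝ E] [UniformSpace E] [IsUniformAddGroup E]
  [ContinuousSMul ℝ E]
  {X : Type*} [AddCommGroup X] [Module ℝ X] [UniformSpace X] [IsUniformAddGroup X]
  [ContinuousSMul ℝ X]

/-- Step 1: if the range of a continuous linear map is non-meagre, then closures of images
of neighborhoods of zero are neighborhoods of zero. -/
theorem myStep1 (f : E →ₗ[ℝ] X) (hr : ¬ IsMeagre (Set.range f))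
    {U : Set E} (hU : U ∈ 𝓝 0) : closure (f '' U) ∈ 𝓝 (0 : X) := by
  obtain ⟨V, hV, hVU⟩ := exists_nhds_half_neg hU
  -- the scalings of `f '' V` by `n+1` cover the range of `f`
  have hcov : Set.range f ⊆ ⋃ n : ℕ, ((n : ℝ) + 1) • (f '' V) := by
    rintro _ ⟨x, rfl⟩
    have habs : Absorbent ℝ V := absorbent_nhds_zero hV
    have hev := (absorbent_iff_eventually_nhdsNE_zero.mp habs) x
    obtain ⟨ε, hε, hball⟩ := Metric.mem_nhdsWithin_iff.mp hev
    obtain ⟨n, hn⟩ := exists_nat_gt (1 / ε)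
    have hnpos : (0 : ℝ) < (n : ℝ) + 1 := by positivity
    have hc : ((n : ℝ) + 1)⁻¹ ≠ 0 := by positivity
    have hcV : ((n : ℝ) + 1)⁻¹ • x ∈ V := by
      apply hball
      constructor
      · rw [Metric.mem_ball, Real.dist_eq, sub_zero, abs_of_pos (by positivity)]
        have h1 : (1 : ℝ) / ε < (n : ℝ) + 1 := lt_of_lt_of_le hn (by linarith)
        have h2 : (1 : ℝ) < ε * ((n : ℝ) + 1) := by
          calc (1 : ℝ) = ε * (1 / ε) := by field_simp
          _ < ε * ((n : ℝ) + 1) := mul_lt_mul_of_pos_left h1 hε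
        rw [show ((n : ℝ) + 1)⁻¹ = 1 / ((n : ℝ) + 1) by rw [one_div]]
        rw [div_lt_iff₀ hnpos]
        linarith
      · exact Set.mem_compl_singleton_iff.mpr hc
    refine mem_iUnion.mpr ⟨n, Set.mem_smul_set.mpr ⟨f (((n : ℝ) + 1)⁻¹ • x), ⟨_, hcV, rfl⟩, ?_⟩⟩
    rw [← map_smul, smul_smul, mul_inv_cancel₀ (ne_of_gt hnpos), one_smul]
  -- hence `f '' V` is non-meagre
  have hne : ¬ IsMeagre (f '' V) := by
    intro h
    apply hr
    refine IsMeagre.mono hcov (isMeagre_iUnion (f := fun n : ℕ => ((n : ℝ) + 1) • (f '' V)) ?_)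
    intro n
    have hn0 : ((n : ℝ) + 1) ≠ 0 := by positivity
    have heq : ((n : ℝ) + 1) • (f '' V)
        = (Homeomorph.smulOfNeZero ((n : ℝ) + 1) hn0 (α := X)).symm ⁻¹' (f '' V) := by
      ext z
      rw [Set.mem_preimage, Homeomorph.smulOfNeZero_symm_apply]
      exact mem_smul_set_iff_inv_smul_mem₀ hn0 _ _
    simp only [heq]
    exact h.preimage_of_isOpenMap (Homeomorph.continuous _) (Homeomorph.isOpenMap _)
  -- so the closure of `f '' V` has nonempty interior
  have hint : (interior (closure (f '' V))).Nonempty := by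
    rw [nonempty_iff_ne_empty]
    intro h
    apply hne
    rw [isMeagre_iff_countable_union_isNowhereDense]
    exact ⟨{f '' V}, by simpa [IsNowhereDense] using h, countable_singleton _, by simp⟩
  obtain ⟨a, ha⟩ := hint
  have hopen : (fun z : X => z - a) '' interior (closure (f '' V)) ∈ 𝓝 (0 : X) := by
    have hmap : IsOpenMap (fun z : X => z - a) := (Homeomorph.subRight a).isOpenMap
    exact (hmap _ isOpen_interior).mem_nhds ⟨a, ha, sub_self a⟩
  refine mem_of_superset hopen ?_
  rintro _ ⟨z, hz, rfl⟩
  have hz' : z ∈ closure (f '' V) := interior_subset hz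
  have ha' : a ∈ closure (f '' V) := interior_subset ha
  have hsub : z - a ∈ closure ((f '' V) - (f '' V)) :=
    map_mem_closure₂ continuous_sub hz' ha' (fun x hx y hy => Set.sub_mem_sub hx hy)
  refine closure_mono ?_ hsub
  rintro _ ⟨_, ⟨xp, hxp, rfl⟩, _, ⟨xq, hxq, rfl⟩, rfl⟩
  exact ⟨xp - xq, hVU _ hxp _ hxq, map_sub f xp xq⟩

/-- Step 2: under completeness, "almost open" implies "open" (at zero). -/
theorem myStep2 [CompleteSpace E] [(𝓤 E).IsCountablyGenerated] [(𝓤 X).IsCountablyGenerated]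
    [T2Space X] (f : E →ₗ[ℝ] X) (hf : Continuous f)
    (H : ∀ U ∈ 𝓝 (0 : E), closure (f '' U) ∈ 𝓝 (0 : X)) :
    ∀ U ∈ 𝓝 (0 : E), f '' U ∈ 𝓝 (0 : X) := by
  intro U hU
  obtain ⟨u, hu⟩ := (𝓝 (0 : E)).exists_antitone_basis
  obtain ⟨w, hw⟩ := (𝓝 (0 : X)).exists_antitone_basis
  obtain ⟨U', hU', hU'c, hU'U⟩ := exists_mem_nhds_isClosed_subset hU
  -- a "shrinking" function
  have hrec : ∀ W : Set E, ∃ W' : Set E, W ∈ 𝓝 (0 : E) → W' ∈ 𝓝 (0 : E) ∧ W' ⊆ W ∧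
      (∀ a ∈ W', ∀ b ∈ W', a + b ∈ W) ∧ (∀ a ∈ W', -a ∈ W') := by
    intro W
    by_cases hW : W ∈ 𝓝 (0 : E)
    · obtain ⟨S, hS, hS2⟩ := exists_nhds_zero_half hW
      have hnegS : (fun x : E => -x) ⁻¹' S ∈ 𝓝 (0 : E) := by
        apply continuous_neg.continuousAt.preimage_mem_nhds
        rwa [neg_zero]
      refine ⟨S ∩ (fun x : E => -x) ⁻¹' S, fun _ => ⟨inter_mem hS hnegS, ?_, ?_, ?_⟩⟩
      · intro a ha
        have h0 : (0 : E) ∈ S := mem_of_mem_nhds hS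
        simpa using hS2 a ha.1 0 h0
      · intro a ha b hb
        exact hS2 a ha.1 b hb.1
      · rintro a ⟨ha1, ha2⟩
        exact ⟨ha2, by simpa using ha1⟩
    · exact ⟨∅, fun h => absurd h hW⟩
  choose sh hsh using hrec
  -- the sequence of neighborhoods
  set V : ℕ → Set E := fun n => Nat.rec (sh (U' ∩ u 0)) (fun n Vn => sh (Vn ∩ u (n + 1))) n
    with hVdef
  have hV0mem : ∀ n, V n ∈ 𝓝 (0 : E) := by
    intro n
    induction n with
    | zero =>
      exact (hsh _ (inter_mem hU' (hu.1.mem_of_mem trivial))).1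
    | succ n ih =>
      exact (hsh _ (inter_mem ih (hu.1.mem_of_mem trivial))).1
  have hVsub0 : V 0 ⊆ U' :=
    fun a ha => ((hsh _ (inter_mem hU' (hu.1.mem_of_mem trivial))).2.1 ha).1
  have hVsub : ∀ n, V (n + 1) ⊆ V n ∩ u (n + 1) := by
    intro n
    exact (hsh _ (inter_mem (hV0mem n) (hu.1.mem_of_mem trivial))).2.1
  have hVadd : ∀ n, ∀ a ∈ V (n + 1), ∀ b ∈ V (n + 1), a + b ∈ V n := by
    intro n a ha b hb
    exact ((hsh _ (inter_mem (hV0mem n) (hu.1.mem_of_mem trivial))).2.2.1 a ha b hb).1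
  have hVneg : ∀ n, ∀ a ∈ V n, -a ∈ V n := by
    intro n
    match n with
    | 0 => exact (hsh _ (inter_mem hU' (hu.1.mem_of_mem trivial))).2.2.2
    | (n+1) => exact (hsh _ (inter_mem (hV0mem n) (hu.1.mem_of_mem trivial))).2.2.2
  have hVanti : ∀ m n : ℕ, m ≤ n → V n ⊆ V m := by
    intro m n hmn
    induction n with
    | zero => rw [Nat.le_zero.mp hmn]
    | succ n ih =>
      rcases Nat.lt_or_ge m (n + 1) with h | h
      · exact ((hVsub n).trans inter_subset_left).trans (ih (by omega))
      · rw [Nat.le_antisymm hmn h]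
  have hVu : ∀ n, V n ⊆ u n := by
    intro n
    match n with
    | 0 => exact fun a ha => ((hsh _ (inter_mem hU' (hu.1.mem_of_mem trivial))).2.1 ha).2
    | (n+1) => exact fun a ha => ((hVsub n) ha).2
  -- sums of elements of successive `V`s stay controlled
  have hsum : ∀ (x : ℕ → E), (∀ j, x j ∈ V (j + 1)) → ∀ (k m : ℕ),
      (∑ j ∈ Finset.Ico m (m + k), x j) ∈ V m := by
    intro x hx k
    induction k with
    | zero => intro m; simpa using mem_of_mem_nhds (hV0mem m)
    | succ k ih =>
      intro m
      rw [show m + (k + 1) = (m + 1) + k by omega,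
        Finset.sum_eq_sum_Ico_succ_bot (by omega)]
      exact hVadd m _ (hx m) _ (ih (m + 1))
  -- main claim
  have claim : closure (f '' V 1) ⊆ f '' U := by
    intro y hy
    have hstep : ∀ (n : ℕ) (z : X), ∃ x : E, z ∈ closure (f '' V (n + 1)) →
        x ∈ V (n + 1) ∧ z - f x ∈ closure (f '' V (n + 2)) ∧ z - f x ∈ w n := by
      intro n z
      by_cases hz : z ∈ closure (f '' V (n + 1))
      · have hN : closure (f '' V (n + 2)) ∩ w n ∈ 𝓝 (0 : X) :=
          inter_mem (H _ (hV0mem (n + 2))) (hw.1.mem_of_mem trivial)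
        have hM : (fun t : X => z - t) ⁻¹' (closure (f '' V (n + 2)) ∩ w n) ∈ 𝓝 z := by
          apply (continuous_const.sub continuous_id).continuousAt.preimage_mem_nhds
          simpa using hN
        obtain ⟨t, htM, ht⟩ := mem_closure_iff_nhds.mp hz _ hM
        obtain ⟨x, hx, rfl⟩ := ht
        exact ⟨x, fun _ => ⟨hx, htM.1, htM.2⟩⟩
      · exact ⟨0, fun h => absurd h hz⟩
    choose g2 hg2 using hstep
    set r : ℕ → X := fun n => Nat.rec y (fun n rn => rn - f (g2 n rn)) n with hrdef
    have hrcl : ∀ n, r n ∈ closure (f '' V (n + 1)) := by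
      intro n
      induction n with
      | zero => exact hy
      | succ n ih => exact (hg2 n (r n) ih).2.1
    set x : ℕ → E := fun n => g2 n (r n) with hxdef
    have hxV : ∀ n, x n ∈ V (n + 1) := fun n => (hg2 n (r n) (hrcl n)).1
    have hrw : ∀ n, r (n + 1) ∈ w n := fun n => (hg2 n (r n) (hrcl n)).2.2
    set s : ℕ → E := fun n => ∑ j ∈ Finset.range n, x j with hsdef
    have hrs : ∀ n, r n = y - f (s n) := by
      intro n
      induction n with
      | zero => simp [hsdef, hrdef]
      | succ n ih =>
        show r n - f (x n) = y - f (s (n + 1))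
        rw [ih, hsdef]
        simp only [Finset.sum_range_succ, map_add, sub_sub]
    have hsV : ∀ k l : ℕ, k ≤ l → s l - s k ∈ V k := by
      intro k l hkl
      have : s l - s k = ∑ j ∈ Finset.Ico k l, x j := by
        rw [hsdef]
        exact (Finset.sum_Ico_eq_sub _ hkl).symm
      rw [this, show l = k + (l - k) by omega]
      exact hsum x hxV (l - k) k
    have hcauchy : CauchySeq s := by
      rw [cauchySeq_iff]
      intro W hW
      rw [uniformity_eq_comap_nhds_zero E] at hW
      obtain ⟨T, hT, hTW⟩ := hW
      obtain ⟨m, -, hm⟩ := hu.1.mem_iff.mp hT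
      refine ⟨m, fun k hk l hl => ?_⟩
      apply hTW
      show s l - s k ∈ T
      rcases le_or_gt k l with h | h
      · exact hm (hVu m (hVanti m k hk (hsV k l h)))
      · have := hsV l k (le_of_lt h)
        have hneg := hVneg l _ this
        rw [neg_sub] at hneg
        exact hm (hVu m (hVanti m l hl hneg))
    obtain ⟨e, he⟩ := cauchySeq_tendsto_of_complete hcauchy
    have heU : e ∈ U := by
      apply hU'U
      apply hU'c.mem_of_tendsto he
      filter_upwards with n
      have : s n = ∑ j ∈ Finset.Ico 0 (0 + n), x j := by
        rw [Nat.zero_add, ← Finset.range_eq_Ico]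
      rw [this]
      exact hVsub0 (hsum x hxV n 0)
    have hr0 : Tendsto r atTop (𝓝 (0 : X)) := by
      rw [hw.1.tendsto_right_iff]
      intro i _
      filter_upwards [eventually_ge_atTop (i + 1)] with n hn
      have h1 : n - 1 + 1 = n := by omega
      have h2 : r n ∈ w (n - 1) := by rw [← h1]; exact hrw (n - 1)
      exact hw.2 (by omega) h2
    have hfy : Tendsto (fun n => f (s n)) atTop (𝓝 y) := by
      have heq : (fun n => f (s n)) = fun n => y - r n := by
        funext n; rw [hrs n]; abel
      rw [heq]
      simpa using tendsto_const_nhds.sub hr0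
    have hfe : Tendsto (fun n => f (s n)) atTop (𝓝 (f e)) := (hf.tendsto e).comp he
    exact ⟨e, heU, tendsto_nhds_unique hfe hfy⟩
  exact mem_of_superset (H _ (hV0mem 1)) claim

/-- Step 3: a linear map whose image of the whole space is a neighborhood of zero is
surjective. -/
theorem myStep3 (f : E →ₗ[ℝ] X) (h : f '' (univ : Set E) ∈ 𝓝 (0 : X)) :
    Function.Surjective f := by
  intro x
  have ht : Tendsto (fun c : ℝ => c • x) (𝓝[≠] 0) (𝓝 (0 : X)) := by
    have h1 : Tendsto (fun c : ℝ => c • x) (𝓝 0) (𝓝 ((0 : ℝ) • x)) :=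
      ((continuous_id.smul continuous_const).tendsto (0 : ℝ))
    rw [zero_smul] at h1
    exact h1.mono_left nhdsWithin_le_nhds
  have hev : ∀ᶠ c : ℝ in 𝓝[≠] 0, c • x ∈ f '' univ ∧ c ≠ 0 := by
    refine Filter.Eventually.and ?_ ?_
    · have := Filter.le_def.mp ht _ h
      rw [mem_map] at this
      exact this
    · exact eventually_mem_nhdsWithin
  obtain ⟨c, hc1, hc2⟩ := hev.exists
  obtain ⟨e, -, he⟩ := hc1
  exact ⟨c⁻¹ • e, by rw [map_smul, he, smul_smul, inv_mul_cancel₀ hc2, one_smul]⟩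

end Aux

section Main

/-- Abstract version of the main theorem. -/
theorem myMainAux {F : Type*} [AddCommGroup F] [Module ℝ F] [TopologicalSpace F]
    [IsTopologicalAddGroup F] [T1Space F]
    {X : Type*} [AddCommGroup X] [Module ℝ X] [UniformSpace X] [IsUniformAddGroup X]
    [ContinuousSMul ℝ X] [(𝓤 X).IsCountablyGenerated] [T2Space X] [CompleteSpace X]
    {Y : ℕ → Type*} [∀ i, AddCommGroup (Y i)] [∀ i, Module ℝ (Y i)] [∀ i, UniformSpace (Y i)]
    [∀ i, IsUniformAddGroup (Y i)] [∀ i, ContinuousSMul ℝ (Y i)]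
    [∀ i, (𝓤 (Y i)).IsCountablyGenerated] [∀ i, CompleteSpace (Y i)]
    (jX : X →ₗ[ℝ] F) (hjX : Continuous jX)
    (jY : ∀ i, Y i →ₗ[ℝ] F) (hjY : ∀ i, Continuous (jY i))
    (hinj : ∀ i, Function.Injective (jY i))
    (hcov : ∀ x : X, ∃ i y, jY i y = jX x) :
    ∃ i, ∃ g : X →ₗ[ℝ] Y i, Continuous g ∧ (∀ x, jY i (g x) = jX x) := by
  haveI : BaireSpace X := myBaireSpace
  -- the graph submodules
  set K : ∀ i, Submodule ℝ (X × Y i) := fun i =>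
    LinearMap.ker ((jX.comp (LinearMap.fst ℝ X (Y i))) -
      ((jY i).comp (LinearMap.snd ℝ X (Y i)))) with hKdef
  have hmemK : ∀ i (p : X × Y i), p ∈ K i ↔ jX p.1 = jY i p.2 := by
    intro i p
    rw [hKdef]
    simp only [LinearMap.mem_ker, LinearMap.sub_apply, LinearMap.coe_comp, Function.comp_apply,
      sub_eq_zero]
    exact Iff.rfl
  haveI hUAG : ∀ i, IsUniformAddGroup (K i) := fun i => by
    exact IsUniformAddGroup.comap (K i).subtype
  have hclosed : ∀ i, IsClosed ((K i : Set (X × Y i))) := by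
    intro i
    have hc : Continuous fun p : X × Y i => jX p.1 - jY i p.2 :=
      (hjX.comp continuous_fst).sub ((hjY i).comp continuous_snd)
    have h1 : (K i : Set (X × Y i)) = (fun p : X × Y i => jX p.1 - jY i p.2) ⁻¹' {0} := by
      ext p
      simp only [SetLike.mem_coe, hmemK, Set.mem_preimage, Set.mem_singleton_iff, sub_eq_zero]
    rw [h1]
    exact isClosed_singleton.preimage hc
  haveI : ∀ i, CompleteSpace (K i) := fun i => (hclosed i).completeSpace_coe
  haveI : ∀ i, (𝓤 (X × Y i)).IsCountablyGenerated := by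
    intro i
    rw [uniformity_prod_eq_comap_prod]
    exact Filter.comap.isCountablyGenerated _ _
  haveI : ∀ i, (𝓤 (K i)).IsCountablyGenerated := by
    intro i
    rw [uniformity_subtype]
    exact Filter.comap.isCountablyGenerated _ _
  -- the projections onto X
  set fi : ∀ i, K i →ₗ[ℝ] X := fun i => (LinearMap.fst ℝ X (Y i)).comp (K i).subtype with hfidef
  have hfic : ∀ i, Continuous (fi i) := fun i => continuous_fst.comp continuous_subtype_val
  -- the ranges cover X
  have hcovr : (univ : Set X) ⊆ ⋃ i, Set.range (fi i) := by
    intro x _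
    obtain ⟨i, y, hy⟩ := hcov x
    exact mem_iUnion.mpr ⟨i, ⟨⟨(x, y), (hmemK i (x, y)).mpr hy.symm⟩, rfl⟩⟩
  -- one of the ranges is non-meagre
  have hsel : ∃ i, ¬ IsMeagre (Set.range (fi i)) := by
    by_contra hall
    push_neg at hall
    have h1 : IsMeagre (univ : Set X) :=
      (isMeagre_iUnion fun i => hall i).mono hcovr
    have h2 : ((univ : Set X)ᶜ) ∈ residual X := h1
    rw [compl_univ] at h2
    have h3 := dense_of_mem_residual h2
    obtain ⟨z, hz⟩ := h3.nonempty
    exact hz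
  obtain ⟨i, hi⟩ := hsel
  -- apply the open mapping machinery
  have hopen : ∀ U ∈ 𝓝 (0 : K i), (fi i) '' U ∈ 𝓝 (0 : X) :=
    myStep2 (fi i) (hfic i) (fun U hU => myStep1 (fi i) hi hU)
  have hsurj : Function.Surjective (fi i) := myStep3 (fi i) (hopen univ univ_mem)
  have hinjf : Function.Injective (fi i) := by
    intro p q hpq
    apply Subtype.ext
    have h1 : (p : X × Y i).1 = (q : X × Y i).1 := hpq
    have hp := (hmemK i p).mp p.2
    have hq := (hmemK i q).mp q.2
    have h2 : (p : X × Y i).2 = (q : X × Y i).2 := by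
      apply hinj i
      rw [← hp, ← hq, h1]
    exact Prod.ext h1 h2
  set equiv := LinearEquiv.ofBijective (fi i) ⟨hinjf, hsurj⟩ with hequivdef
  set g : X →ₗ[ℝ] Y i :=
    ((LinearMap.snd ℝ X (Y i)).comp (K i).subtype).comp equiv.symm.toLinearMap with hgdef
  have hgval : ∀ p : K i, g (fi i p) = (p : X × Y i).2 := by
    intro p
    rw [hgdef]
    simp only [LinearMap.coe_comp, Function.comp_apply, LinearEquiv.coe_coe]
    rw [show fi i p = equiv p from rfl, equiv.symm_apply_apply]
    rfl
  have hcomm : ∀ x : X, jY i (g x) = jX x := by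
    intro x
    obtain ⟨p, rfl⟩ := hsurj x
    rw [hgval p]
    have hp := (hmemK i p).mp p.2
    rw [← hp]
    rfl
  refine ⟨i, g, ?_, hcomm⟩
  apply continuous_of_continuousAt_zero g
  rw [ContinuousAt, map_zero]
  intro N hN
  rw [mem_map]
  have h1 : (fun p : K i => (p : X × Y i).2) ⁻¹' N ∈ 𝓝 (0 : K i) := by
    apply ((continuous_snd.comp continuous_subtype_val).continuousAt (x := 0)).preimage_mem_nhds
    simpa using hN
  apply mem_of_superset (hopen _ h1)
  rintro _ ⟨p, hp, rfl⟩
  show g (fi i p) ∈ N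
  rw [hgval p]
  exact hp

end Main

/-- A Fréchet subspace of a Hausdorff locally convex space `F`: a linear subspace equipped
with a (generally finer) complete metrizable locally convex Hausdorff vector topology such
that the inclusion into `F` is continuous. -/
structure FrechetSubspace (F : Type*) [AddCommGroup F] [Module ℝ F] [TopologicalSpace F] where
  toSubmodule : Submodule ℝ F
  uniformSpace : UniformSpace toSubmodule
  uniformAddGroup : @IsUniformAddGroup toSubmodule uniformSpace _
  continuousSMul : @ContinuousSMul ℝ toSubmodule _ _ uniformSpace.toTopologicalSpace
  locallyConvex : @LocallyConvexSpace ℝ toSubmodule _ _ _ _ uniformSpace.toTopologicalSpace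
  t2 : @T2Space toSubmodule uniformSpace.toTopologicalSpace
  complete : @CompleteSpace toSubmodule uniformSpace
  metrizable : @TopologicalSpace.MetrizableSpace toSubmodule uniformSpace.toTopologicalSpace
  continuous_val : @Continuous toSubmodule F uniformSpace.toTopologicalSpace _ Subtype.val

/-- If a Hausdorff locally convex space `F` is covered by a countable family of Fréchet
subspaces `G i`, then every Fréchet subspace `Gt` of `F` is contained in some `G i`, with
continuous inclusion map `Gt → G i`. -/
theorem frechetSubspace_cofinal
    (F : Type*) [AddCommGroup F] [Module ℝ F] [TopologicalSpace F] [IsTopologicalAddGroup F]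
    [ContinuousSMul ℝ F] [LocallyConvexSpace ℝ F] [T2Space F]
    (G : ℕ → FrechetSubspace F)
    (hcover : ∀ x : F, ∃ i, x ∈ (G i).toSubmodule)
    (Gt : FrechetSubspace F) :
    ∃ i, ∃ h : (Gt.toSubmodule : Set F) ⊆ ((G i).toSubmodule : Set F),
      @Continuous _ _ Gt.uniformSpace.toTopologicalSpace (G i).uniformSpace.toTopologicalSpace
        (Set.inclusion h) := by
  letI iUX : UniformSpace ↥Gt.toSubmodule := Gt.uniformSpace
  haveI : @IsUniformAddGroup ↥Gt.toSubmodule iUX _ := Gt.uniformAddGroup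
  haveI : @ContinuousSMul ℝ ↥Gt.toSubmodule _ _ iUX.toTopologicalSpace := Gt.continuousSMul
  haveI : @T2Space ↥Gt.toSubmodule iUX.toTopologicalSpace := Gt.t2
  haveI : @CompleteSpace ↥Gt.toSubmodule iUX := Gt.complete
  haveI : @TopologicalSpace.MetrizableSpace ↥Gt.toSubmodule iUX.toTopologicalSpace :=
    Gt.metrizable
  haveI : (𝓤 ↥Gt.toSubmodule).IsCountablyGenerated :=
    IsUniformAddGroup.uniformity_countably_generated
  letI iUY : ∀ i, UniformSpace ↥(G i).toSubmodule := fun i => (G i).uniformSpace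
  haveI : ∀ i, @IsUniformAddGroup ↥(G i).toSubmodule (iUY i) _ := fun i => (G i).uniformAddGroup
  haveI : ∀ i, @ContinuousSMul ℝ ↥(G i).toSubmodule _ _ (iUY i).toTopologicalSpace :=
    fun i => (G i).continuousSMul
  haveI : ∀ i, @CompleteSpace ↥(G i).toSubmodule (iUY i) := fun i => (G i).complete
  haveI : ∀ i, @TopologicalSpace.MetrizableSpace ↥(G i).toSubmodule (iUY i).toTopologicalSpace :=
    fun i => (G i).metrizable
  haveI : ∀ i, (𝓤 ↥(G i).toSubmodule).IsCountablyGenerated := fun i =>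
    IsUniformAddGroup.uniformity_countably_generated
  have hcov : ∀ x : ↥Gt.toSubmodule, ∃ i y,
      ((G i).toSubmodule.subtype) y = (Gt.toSubmodule.subtype) x := by
    intro x
    obtain ⟨i, hi⟩ := hcover (x : F)
    exact ⟨i, ⟨(x : F), hi⟩, rfl⟩
  obtain ⟨i, g, hgc, hgcomm⟩ := myMainAux (Y := fun i => ↥(G i).toSubmodule)
    Gt.toSubmodule.subtype Gt.continuous_val
    (fun i => (G i).toSubmodule.subtype) (fun i => (G i).continuous_val)
    (fun i => Subtype.val_injective) hcov
  have hsub : (Gt.toSubmodule : Set F) ⊆ ((G i).toSubmodule : Set F) := by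
    intro z hz
    have h1 : ((g ⟨z, hz⟩ : ↥(G i).toSubmodule) : F) = z := hgcomm ⟨z, hz⟩
    have h2 := (g ⟨z, hz⟩).2
    rw [← h1]
    exact h2
  refine ⟨i, hsub, ?_⟩
  have heq : Set.inclusion hsub = fun x => g x := by
    funext x
    apply Subtype.ext
    exact (hgcomm x).symm
  rw [heq]
  exact hgc
end

section
/- Let F be a Hausdorff locally convex topological vector space over ℝ, let (E_i)_{i∈ℕ} be a sequence of Fréchet spaces, and let p_i : E_i → F be continuous linear maps with F equal to the union of the ranges of the p_i (i.e., F is an (LF)-space with respect to this data). Then there exists a countable family (G_i)_{i∈ℕ} of Fréchet subspaces of F such that G_i equals the range of p_i as a set, the union of the G_i is F, and every Fréchet subspace G̃ of F is contained (as a set) in some G_i with continuous inclusion map G̃ → G_i. -/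
open Filter Set Topology Uniformity Pointwise Classical

/-! ### Auxiliary lemmas on local convexity -/

theorem myLocallyConvex_induced {E F : Type*} [AddCommGroup E] [Module ℝ E] [AddCommGroup F]
    [Module ℝ F] [t : TopologicalSpace F] [LocallyConvexSpace ℝ F] (f : E →ₗ[ℝ] F) :
    @LocallyConvexSpace ℝ E _ _ _ _ (t.induced f) := by
  letI : TopologicalSpace E := t.induced f
  refine LocallyConvexSpace.ofBases ℝ E (fun _ s => f ⁻¹' s)
    (fun x s => s ∈ 𝓝 (f x) ∧ Convex ℝ s) (fun x => ?_)
    (fun x s hs => hs.2.linear_preimage f)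
  rw [nhds_induced]
  exact (LocallyConvexSpace.convex_basis (f x)).comap _

theorem myLocallyConvex_quotient {E : Type*} [AddCommGroup E] [Module ℝ E]
    [TopologicalSpace E] [IsTopologicalAddGroup E] [LocallyConvexSpace ℝ E]
    (K : Submodule ℝ E) : LocallyConvexSpace ℝ (E ⧸ K) := by
  have hq : 𝓝 (0 : E ⧸ K) = Filter.map K.mkQ (𝓝 0) := by
    have := K.isOpenQuotientMap_mkQ.map_nhds_eq (0 : E)
    rw [map_zero] at this
    exact this.symm
  refine LocallyConvexSpace.ofBasisZero ℝ (E ⧸ K)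
    (fun s : Set E => K.mkQ '' s) (fun s => s ∈ 𝓝 (0:E) ∧ Convex ℝ s) ?_
    (fun s hs => hs.2.linear_image K.mkQ)
  rw [hq]
  exact (LocallyConvexSpace.convex_basis (0 : E)).map _

/-! ### The open mapping lemma for maps with non-meagre range -/

section OM
variable {X Y : Type*}
  [AddCommGroup X] [Module ℝ X] [TopologicalSpace X] [IsTopologicalAddGroup X] [ContinuousSMul ℝ X]
  [AddCommGroup Y] [Module ℝ Y] [TopologicalSpace Y] [IsTopologicalAddGroup Y] [ContinuousSMul ℝ Y]

omit [IsTopologicalAddGroup Y] in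
lemma mem_nat_smul_of_nhds {V : Set Y} (hV : V ∈ 𝓝 (0 : Y)) (y : Y) :
    ∃ n : ℕ, y ∈ ((n : ℝ) + 1) • V := by
  have h0 : Tendsto (fun n : ℕ => ((n : ℝ) + 1)⁻¹) atTop (𝓝 0) :=
    tendsto_one_div_add_atTop_nhds_zero_nat.congr (by intro n; rw [one_div])
  have h1 : Tendsto (fun n : ℕ => ((n : ℝ) + 1)⁻¹ • y) atTop (𝓝 (0 : Y)) := by
    have := h0.smul_const y
    rwa [zero_smul] at this
  rcases (h1.eventually_mem hV).exists with ⟨n, hn⟩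
  exact ⟨n, (mem_smul_set_iff_inv_smul_mem₀ (Nat.cast_add_one_ne_zero n) _ _).2 hn⟩

omit [IsTopologicalAddGroup Y] in
lemma isMeagre_smul {c : ℝ} (hc : c ≠ 0) {s : Set Y} (hs : IsMeagre s) : IsMeagre (c • s) := by
  have h : c • s = (fun y : Y => c⁻¹ • y) ⁻¹' s := by
    ext y; exact mem_smul_set_iff_inv_smul_mem₀ hc _ _
  rw [h]
  exact hs.preimage_of_isOpenMap (continuous_const_smul _)
    (isOpenMap_smul₀ (inv_ne_zero hc))

omit [IsTopologicalAddGroup X] [IsTopologicalAddGroup Y] in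
lemma not_meagre_image_nhd (f : X →ₗ[ℝ] Y) (hr : ¬ IsMeagre (Set.range f))
    {V : Set X} (hV : V ∈ 𝓝 (0 : X)) : ¬ IsMeagre (f '' V) := by
  intro hm
  apply hr
  have hsub : Set.range f ⊆ ⋃ n : ℕ, ((n : ℝ) + 1) • (f '' V) := by
    rintro _ ⟨x, rfl⟩
    obtain ⟨n, hn⟩ := mem_nat_smul_of_nhds hV x
    obtain ⟨z, hz, hzz⟩ := hn
    refine Set.mem_iUnion.2 ⟨n, ?_⟩
    rw [← hzz, map_smul]
    exact Set.smul_mem_smul_set (Set.mem_image_of_mem f hz)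
  refine (isMeagre_iUnion fun n => ?_).mono hsub
  exact isMeagre_smul (Nat.cast_add_one_ne_zero n) hm

lemma step1 (f : X →ₗ[ℝ] Y) (hr : ¬ IsMeagre (Set.range f))
    {U : Set X} (hU : U ∈ 𝓝 (0 : X)) : closure (f '' U) ∈ 𝓝 (0 : Y) := by
  obtain ⟨V1, hV1, hV1add⟩ := exists_nhds_zero_half hU
  set V := V1 ∩ (-V1) with hVdef
  have hV : V ∈ 𝓝 (0 : X) := by
    refine Filter.inter_mem hV1 ?_
    simpa using neg_mem_nhds_zero X hV1
  have hnm := not_meagre_image_nhd f hr hV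
  have hint : (interior (closure (f '' V))).Nonempty := by
    rw [Set.nonempty_iff_ne_empty]
    intro h
    apply hnm
    rw [isMeagre_iff_countable_union_isNowhereDense]
    refine ⟨{closure (f '' V)}, ?_, Set.countable_singleton _, ?_⟩
    · intro t ht
      rw [Set.mem_singleton_iff] at ht; subst ht
      rw [IsNowhereDense, closure_closure]; exact h
    · rw [Set.sUnion_singleton]; exact subset_closure
  obtain ⟨y, hy⟩ := hint
  have hmem : (fun w => w - y) '' interior (closure (f '' V)) ∈ 𝓝 (0 : Y) := by
    have : IsOpen ((fun w => w - y) '' interior (closure (f '' V))) :=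
      (isOpenMap_sub_right y) _ isOpen_interior
    exact this.mem_nhds ⟨y, hy, sub_self y⟩
  refine Filter.mem_of_superset hmem ?_
  rintro _ ⟨w, hw, rfl⟩
  have hw' : w ∈ closure (f '' V) := interior_subset hw
  have hy' : y ∈ closure (f '' V) := interior_subset hy
  have key : closure (f '' V) - closure (f '' V) ⊆ closure (f '' U) := by
    have h1 : closure (f '' V) - closure (f '' V) ⊆ closure (f '' V - f '' V) := by
      calc closure (f '' V) - closure (f '' V)
          = (fun p : Y × Y => p.1 - p.2) '' (closure (f '' V) ×ˢ closure (f '' V)) := by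
            rw [Set.image_prod]; exact Set.image2_sub.symm
        _ ⊆ closure ((fun p : Y × Y => p.1 - p.2) '' ((f '' V) ×ˢ (f '' V))) := by
            rw [← closure_prod_eq]
            exact image_closure_subset_closure_image continuous_sub
        _ = closure (f '' V - f '' V) := by
            rw [Set.image_prod]; exact congrArg closure Set.image2_sub
    refine h1.trans (closure_mono ?_)
    rintro _ ⟨_, ⟨a, ha, rfl⟩, _, ⟨b, hb, rfl⟩, rfl⟩
    show f a - f b ∈ f '' U
    rw [← map_sub]
    refine Set.mem_image_of_mem f ?_
    have hb' : -b ∈ V1 := by simpa using hb.2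
    have := hV1add a ha.1 (-b) hb'
    rwa [← sub_eq_add_neg] at this
  exact key (Set.sub_mem_sub hw' hy')
end OM

lemma step2 {X Y : Type*}
    [AddCommGroup X] [Module ℝ X] [UniformSpace X] [IsUniformAddGroup X] [ContinuousSMul ℝ X]
    [AddCommGroup Y] [Module ℝ Y] [TopologicalSpace Y] [IsTopologicalAddGroup Y] [ContinuousSMul ℝ Y]
    [CompleteSpace X] [FirstCountableTopology X] [FirstCountableTopology Y] [T2Space Y]
    (f : X →ₗ[ℝ] Y) (hf : Continuous f) (hr : ¬ IsMeagre (Set.range f))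
    {U : Set X} (hU : U ∈ 𝓝 (0 : X)) : f '' U ∈ 𝓝 (0 : Y) := by
  obtain ⟨U₁, hU₁, hU₁add⟩ := exists_nhds_zero_half hU
  obtain ⟨u, hu⟩ := (𝓝 (0 : X)).exists_antitone_basis
  obtain ⟨W, hW⟩ := (𝓝 (0 : Y)).exists_antitone_basis
  have hnext : ∀ (n : ℕ) (s : Set X), s ∈ 𝓝 (0 : X) →
      ∃ z : Set X, z ∈ 𝓝 (0 : X) ∧ z ⊆ u n ∧ ∀ a ∈ z, ∀ b ∈ z, a + b ∈ s := by
    intro n s hs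
    obtain ⟨z0, hz0, hz0add⟩ := exists_nhds_zero_half (Filter.inter_mem hs (hu.mem n))
    refine ⟨z0 ∩ u n, Filter.inter_mem hz0 (hu.mem n), Set.inter_subset_right, ?_⟩
    intro a ha b hb
    exact (hz0add a ha.1 b hb.1).1
  let g : ℕ → {s : Set X // s ∈ 𝓝 (0 : X)} → {s : Set X // s ∈ 𝓝 (0 : X)} :=
    fun n s => ⟨choose (hnext n s.1 s.2), (choose_spec (hnext n s.1 s.2)).1⟩
  let V : ℕ → {s : Set X // s ∈ 𝓝 (0 : X)} :=
    fun n => Nat.rec (g 0 ⟨U₁, hU₁⟩) (fun k Vk => g (k + 1) Vk) n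
  have hV0 : ∀ a ∈ (V 0).1, ∀ b ∈ (V 0).1, a + b ∈ U₁ :=
    (choose_spec (hnext 0 U₁ hU₁)).2.2
  have hVsucc : ∀ n, ∀ a ∈ (V (n+1)).1, ∀ b ∈ (V (n+1)).1, a + b ∈ (V n).1 :=
    fun n => (choose_spec (hnext (n+1) (V n).1 (V n).2)).2.2
  have hVu : ∀ n, (V n).1 ⊆ u n := by
    intro n
    cases n with
    | zero => exact (choose_spec (hnext 0 U₁ hU₁)).2.1
    | succ k => exact (choose_spec (hnext (k+1) (V k).1 (V k).2)).2.1
  have hzero : ∀ n, (0 : X) ∈ (V n).1 := fun n => mem_of_mem_nhds (V n).2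
  have hclos : ∀ n, closure (f '' (V n).1) ∈ 𝓝 (0 : Y) := fun n => step1 f hr (V n).2
  have hstep : ∀ (n : ℕ) (y' : Y), y' ∈ closure (f '' (V n).1) →
      ∃ a : X, (a ∈ (V n).1 ∧ y' - f a ∈ W (n+1)) ∧
        y' - f a ∈ closure (f '' (V (n+1)).1) := by
    intro n y' hy'
    have hM : closure (f '' (V (n+1)).1) ∩ W (n+1) ∈ 𝓝 (0 : Y) :=
      Filter.inter_mem (hclos (n+1)) (hW.mem (n+1))
    have hN : (fun z : Y => y' - z) ⁻¹' (closure (f '' (V (n+1)).1) ∩ W (n+1)) ∈ 𝓝 y' := by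
      refine (continuous_const.sub continuous_id).continuousAt.preimage_mem_nhds ?_
      simpa using hM
    rcases mem_closure_iff_nhds.1 hy' _ hN with ⟨z, hz1, hz2⟩
    obtain ⟨a, ha, rfl⟩ := hz2
    exact ⟨a, ⟨ha, hz1.2⟩, hz1.1⟩
  refine Filter.mem_of_superset (hclos 0) ?_
  intro y hy
  let c : ∀ n : ℕ, PSigma fun y' : Y => y' ∈ closure (f '' (V n).1) :=
    fun n => Nat.rec ⟨y, hy⟩
      (fun k ck => ⟨ck.1 - f (choose (hstep k ck.1 ck.2)),
        (choose_spec (hstep k ck.1 ck.2)).2⟩) n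
  let a : ℕ → X := fun n => choose (hstep n (c n).1 (c n).2)
  have ha : ∀ n, a n ∈ (V n).1 ∧ (c n).1 - f (a n) ∈ W (n+1) :=
    fun n => (choose_spec (hstep n (c n).1 (c n).2)).1
  have hcsucc : ∀ n, (c (n+1)).1 = (c n).1 - f (a n) := fun n => rfl
  let s : ℕ → X := fun n => ∑ k ∈ Finset.range (n+1), a k
  have hcs : ∀ n, (c (n+1)).1 = y - f (s n) := by
    intro n
    induction n with
    | zero =>
      rw [hcsucc 0]
      show y - f (a 0) = y - f (s 0)
      simp [s, Finset.sum_range_one]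
    | succ k ih =>
      rw [hcsucc (k+1), ih]
      show y - f (s k) - f (a (k+1)) = y - f (s (k+1))
      have : s (k+1) = s k + a (k+1) := by
        simp [s, Finset.sum_range_succ]
      rw [this, map_add, sub_sub]
  have hyW : ∀ n, y - f (s n) ∈ W (n+1) := by
    intro n
    have h2 := (ha n).2
    rwa [← hcsucc n, hcs n] at h2
  have hIco : ∀ (k n : ℕ), (∑ j ∈ Finset.Ico (n+1) (n+1+k), a j) ∈ (V n).1 := by
    intro k
    induction k with
    | zero => intro n; simpa using hzero n
    | succ k ih =>
      intro n
      have hlt : n + 1 < n + 1 + (k + 1) := by omega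
      rw [Finset.sum_eq_sum_Ico_succ_bot hlt]
      have heq : n + 1 + (k + 1) = (n + 1) + 1 + k := by omega
      rw [heq]
      exact hVsucc n _ (ha (n+1)).1 _ (ih (n+1))
  have hdiff : ∀ n m : ℕ, n ≤ m → s m - s n ∈ (V n).1 := by
    intro n m hnm
    have h1 : s m - s n = ∑ j ∈ Finset.Ico (n+1) (m+1), a j := by
      rw [Finset.sum_Ico_eq_sub _ (by omega : n + 1 ≤ m + 1)]
    rw [h1]
    have : m + 1 = n + 1 + (m - n) := by omega
    rw [this]
    exact hIco (m - n) n
  have hUb : (𝓤 X).HasBasis (fun _ : ℕ => True) (fun i => {p : X × X | p.1 - p.2 ∈ u i}) := by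
    rw [uniformity_eq_comap_nhds_zero_swapped]
    exact hu.toHasBasis.comap fun p : X × X => p.1 - p.2
  have hcauchy : CauchySeq s := by
    rw [hUb.cauchySeq_iff']
    intro i _
    exact ⟨i, fun n hn => by simpa using hVu i (hdiff i n hn)⟩
  obtain ⟨x, hx⟩ := cauchySeq_tendsto_of_complete hcauchy
  have h1 : Tendsto (fun n => f (s n)) atTop (𝓝 (f x)) := (hf.tendsto x).comp hx
  have h2 : Tendsto (fun n => f (s n)) atTop (𝓝 y) := by
    have h3 : Tendsto (fun n => y - f (s n)) atTop (𝓝 (0 : Y)) := by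
      rw [hW.toHasBasis.tendsto_right_iff]
      intro i _
      filter_upwards [Filter.eventually_ge_atTop i] with n hn
      exact hW.antitone (by omega) (hyW n)
    have h4 := (tendsto_const_nhds (x := y) (f := atTop (α := ℕ))).sub h3
    simpa using h4
  have hfx : f x = y := tendsto_nhds_unique h1 h2
  have hsnT : ∀ n, s n ∈ (V 0).1 + (V 0).1 := by
    intro n
    refine ⟨a 0, (ha 0).1, s n - s 0, hdiff 0 n (Nat.zero_le n), ?_⟩
    have hs0 : s 0 = a 0 := by simp [s, Finset.sum_range_one]
    show a 0 + (s n - s 0) = s n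
    rw [hs0, add_comm, sub_add_cancel]
  have hxT : x ∈ closure ((V 0).1 + (V 0).1) :=
    mem_closure_of_tendsto hx (Filter.Eventually.of_forall hsnT)
  have hxU : x ∈ U := by
    have hN : (fun w : X => x - w) ⁻¹' U₁ ∈ 𝓝 x := by
      refine (continuous_const.sub continuous_id).continuousAt.preimage_mem_nhds ?_
      simpa using hU₁
    rcases mem_closure_iff_nhds.1 hxT _ hN with ⟨z, hz1, hz2⟩
    obtain ⟨v, hv, v', hv', rfl⟩ := hz2
    have hz3 : v + v' ∈ U₁ := hV0 v hv v' hv'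
    have : (v + v') + (x - (v + v')) ∈ U := hU₁add _ hz3 _ hz1
    simpa using this
  exact ⟨x, hxU, hfx⟩

/-! ### The Fréchet structure on the range of `p` -/

section Construction
variable {E F : Type*}
  [AddCommGroup E] [Module ℝ E] [UniformSpace E] [IsUniformAddGroup E] [ContinuousSMul ℝ E]
  [LocallyConvexSpace ℝ E] [T2Space E] [CompleteSpace E] [TopologicalSpace.MetrizableSpace E]
  [AddCommGroup F] [Module ℝ F] [TopologicalSpace F] [IsTopologicalAddGroup F]
  [ContinuousSMul ℝ F] [T2Space F]

noncomputable def rangeEquiv (p : E →L[ℝ] F) :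
    (E ⧸ LinearMap.ker p.toLinearMap) ≃ₗ[ℝ] LinearMap.range p.toLinearMap :=
  p.toLinearMap.quotKerEquivRange

@[reducible]
noncomputable def quotUniform (p : E →L[ℝ] F) :
    UniformSpace (E ⧸ LinearMap.ker p.toLinearMap) :=
  IsTopologicalAddGroup.rightUniformSpace _

noncomputable def rangeUniform (p : E →L[ℝ] F) :
    UniformSpace (LinearMap.range p.toLinearMap) :=
  (quotUniform p).comap (rangeEquiv p).symm

omit [ContinuousSMul ℝ E] [LocallyConvexSpace ℝ E] [T2Space E] [CompleteSpace E]
  [TopologicalSpace.MetrizableSpace E] [ContinuousSMul ℝ F] in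
theorem ker_isClosed (p : E →L[ℝ] F) :
    IsClosed ((LinearMap.ker p.toLinearMap : Submodule ℝ E) : Set E) := by
  have h : ((LinearMap.ker p.toLinearMap : Submodule ℝ E) : Set E) = p ⁻¹' {0} := by
    ext x; simp [LinearMap.mem_ker]
  rw [h]; exact isClosed_singleton.preimage p.continuous

noncomputable def rangeFrechet (p : E →L[ℝ] F) : FrechetSubspace F := by
  have hKc : IsClosed ((LinearMap.ker p.toLinearMap : Submodule ℝ E) : Set E) := ker_isClosed p
  set K : Submodule ℝ E := LinearMap.ker p.toLinearMap with hK
  letI uQ : UniformSpace (E ⧸ K) := quotUniform p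
  haveI : IsUniformAddGroup (E ⧸ K) := isUniformAddGroup_of_addCommGroup
  haveI : CompleteSpace (E ⧸ K) := QuotientAddGroup.completeSpace_right E K.toAddSubgroup
  haveI : FirstCountableTopology (E ⧸ K) :=
    QuotientAddGroup.instFirstCountableTopology K.toAddSubgroup
  haveI cgQ : (𝓤 (E ⧸ K)).IsCountablyGenerated := by
    rw [uniformity_eq_comap_nhds_zero]; exact Filter.comap.isCountablyGenerated _ _
  haveI : IsClosed (K : Set E) := hKc
  haveI : T3Space (E ⧸ K) := Submodule.t3_quotient_of_isClosed K
  haveI lcQ : LocallyConvexSpace ℝ (E ⧸ K) := myLocallyConvex_quotient K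
  let e : (E ⧸ K) ≃ₗ[ℝ] LinearMap.range p.toLinearMap := rangeEquiv p
  letI uR : UniformSpace (LinearMap.range p.toLinearMap) := rangeUniform p
  have htop : uR.toTopologicalSpace = TopologicalSpace.induced e.symm uQ.toTopologicalSpace :=
    UniformSpace.toTopologicalSpace_comap
  haveI hUAG : @IsUniformAddGroup (LinearMap.range p.toLinearMap) uR _ :=
    IsUniformAddGroup.comap e.symm
  haveI hUI : @IsUniformInducing _ _ uR uQ e.symm := ⟨rfl⟩
  haveI hind : @Topology.IsInducing _ _ uR.toTopologicalSpace uQ.toTopologicalSpace e.symm :=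
    @Topology.IsInducing.mk _ _ uR.toTopologicalSpace uQ.toTopologicalSpace _ htop
  refine
    { toSubmodule := LinearMap.range p.toLinearMap
      uniformSpace := rangeUniform p
      uniformAddGroup := hUAG
      continuousSMul := ?_
      locallyConvex := ?_
      t2 := ?_
      complete := ?_
      metrizable := ?_
      continuous_val := ?_ }
  · letI : TopologicalSpace (LinearMap.range p.toLinearMap) := uR.toTopologicalSpace
    exact Topology.IsInducing.continuousSMul hind continuous_id
      (fun {c x} => map_smul e.symm c x)
  · rw [show uR.toTopologicalSpace
        = TopologicalSpace.induced e.symm uQ.toTopologicalSpace from htop]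
    exact myLocallyConvex_induced e.symm.toLinearMap
  · letI : TopologicalSpace (LinearMap.range p.toLinearMap) := uR.toTopologicalSpace
    exact Topology.IsEmbedding.t2Space ⟨hind, e.symm.injective⟩
  · exact (hUI.completeSpace_congr e.symm.surjective).2 ‹_›
  · letI : UniformSpace (LinearMap.range p.toLinearMap) := uR
    letI : TopologicalSpace (LinearMap.range p.toLinearMap) := uR.toTopologicalSpace
    haveI cgR : (𝓤 (LinearMap.range p.toLinearMap)).IsCountablyGenerated :=
      Filter.comap.isCountablyGenerated _ _
    haveI t2R : T2Space (LinearMap.range p.toLinearMap) :=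
      Topology.IsEmbedding.t2Space ⟨hind, e.symm.injective⟩
    exact UniformSpace.metrizableSpace
  · letI : TopologicalSpace (LinearMap.range p.toLinearMap) := uR.toTopologicalSpace
    have hpbar : Continuous (K.liftQ p.toLinearMap (le_refl K) : E ⧸ K → F) := by
      rw [K.isOpenQuotientMap_mkQ.isQuotientMap.continuous_iff]
      exact p.continuous
    have hval : (Subtype.val : LinearMap.range p.toLinearMap → F) =
        (K.liftQ p.toLinearMap (le_refl K)) ∘ e.symm := by
      funext r
      obtain ⟨q, rfl⟩ := e.surjective r
      obtain ⟨x, rfl⟩ := K.mkQ_surjective q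
      simp only [Function.comp_apply, LinearEquiv.symm_apply_apply]
      have h1 : ((e (K.mkQ x)) : F) = p x := p.toLinearMap.quotKerEquivRange_apply_mk x
      rw [h1]
      simp [Submodule.liftQ_apply]
    rw [hval]
    exact hpbar.comp hind.continuous

theorem rangeFrechet_toSubmodule' (p : E →L[ℝ] F) :
    (rangeFrechet p).toSubmodule = LinearMap.range p.toLinearMap := rfl

theorem rangeFrechet_uniformSpace (p : E →L[ℝ] F) :
    (rangeFrechet p).uniformSpace = rangeUniform p := rfl

omit [ContinuousSMul ℝ E] [LocallyConvexSpace ℝ E] [T2Space E] [CompleteSpace E]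
  [TopologicalSpace.MetrizableSpace E] [IsTopologicalAddGroup F] [ContinuousSMul ℝ F]
  [T2Space F] in
theorem rangeFrechet_set (p : E →L[ℝ] F) :
    ((LinearMap.range p.toLinearMap : Submodule ℝ F) : Set F) = Set.range p := by
  ext x; simp [LinearMap.mem_range]
variable (p : E →L[ℝ] F) {Y : Type*} [AddCommGroup Y] [Module ℝ Y]
    [UniformSpace Y] [IsUniformAddGroup Y] [ContinuousSMul ℝ Y]
    (j : Y →ₗ[ℝ] F)

/-- The fiber product of `p` and `j` inside `E × Y`. -/
noncomputable def fibSub : Submodule ℝ (E × Y) :=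
  LinearMap.ker ((p.toLinearMap.comp (LinearMap.fst ℝ E Y)) - (j.comp (LinearMap.snd ℝ E Y)))

/-- Projection from the fiber product to `Y`. -/
noncomputable def fibProj : ↥(fibSub p j) →ₗ[ℝ] Y :=
  (LinearMap.snd ℝ E Y).comp (fibSub p j).subtype

theorem mem_fibSub {q : E × Y} : q ∈ fibSub p j ↔ p q.1 = j q.2 := by
  simp [fibSub, LinearMap.mem_ker, sub_eq_zero]

theorem cofinal_step (hj : Continuous j) [CompleteSpace Y]
    [TopologicalSpace.MetrizableSpace Y] [T2Space Y]
    (hnm : ¬ IsMeagre (Set.range (fibProj p j))) :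
    ∃ hsub : ∀ y : Y, j y ∈ LinearMap.range p.toLinearMap,
      @Continuous Y ↥(LinearMap.range p.toLinearMap) _
        (rangeUniform p).toTopologicalSpace
        (fun y => ⟨j y, hsub y⟩) := by
  set H : Submodule ℝ (E × Y) := fibSub p j with hH
  -- instances on ↥H
  have hHclosed : IsClosed (H : Set (E × Y)) := by
    have h : (H : Set (E × Y)) =
        (fun q : E × Y => p q.1 - j q.2) ⁻¹' {0} := by
      ext q
      simp only [Set.mem_preimage, Set.mem_singleton_iff, SetLike.mem_coe, hH, mem_fibSub,
        sub_eq_zero]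
    rw [h]
    exact isClosed_singleton.preimage
      ((p.continuous.comp continuous_fst).sub (hj.comp continuous_snd))
  haveI : IsUniformAddGroup ↥H := inferInstanceAs (IsUniformAddGroup H.toAddSubgroup)
  haveI : FirstCountableTopology ↥H :=
    inferInstanceAs (FirstCountableTopology ((H : Set (E × Y)) : Type _))
  haveI : CompleteSpace ↥H := hHclosed.completeSpace_coe
  have hπcont : Continuous (fibProj p j) := continuous_snd.comp continuous_subtype_val
  -- surjectivity of the projection
  have hrangeN : (Set.range (fibProj p j) : Set Y) ∈ 𝓝 (0 : Y) := by
    have := step2 (fibProj p j) hπcont hnm (univ_mem (f := 𝓝 (0 : ↥H)))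
    rwa [Set.image_univ] at this
  have hsurj : Function.Surjective (fibProj p j) := by
    intro y
    obtain ⟨n, z, hz, hzz⟩ := mem_nat_smul_of_nhds hrangeN y
    have hz' : z ∈ LinearMap.range (fibProj p j) := hz
    have hmem : ((n : ℝ) + 1) • z ∈ LinearMap.range (fibProj p j) :=
      Submodule.smul_mem _ _ hz'
    have hy : y = ((n : ℝ) + 1) • z := hzz.symm
    rw [hy]
    exact LinearMap.mem_range.1 hmem
  have hsub : ∀ y : Y, j y ∈ LinearMap.range p.toLinearMap := by
    intro y
    obtain ⟨q, hq⟩ := hsurj y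
    have hmem : p q.val.1 = j q.val.2 := (mem_fibSub p j).1 q.2
    have hq2 : q.val.2 = y := hq
    refine ⟨q.val.1, ?_⟩
    show p q.val.1 = j y
    rw [hmem, hq2]
  refine ⟨hsub, ?_⟩
  -- setup on the range
  set K : Submodule ℝ E := LinearMap.ker p.toLinearMap with hK
  letI uQ : UniformSpace (E ⧸ K) := quotUniform p
  haveI : IsUniformAddGroup (E ⧸ K) := isUniformAddGroup_of_addCommGroup
  let e : (E ⧸ K) ≃ₗ[ℝ] LinearMap.range p.toLinearMap := rangeEquiv p
  letI uR : UniformSpace (LinearMap.range p.toLinearMap) := rangeUniform p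
  letI tR : TopologicalSpace (LinearMap.range p.toLinearMap) := uR.toTopologicalSpace
  have htop : tR = TopologicalSpace.induced e.symm uQ.toTopologicalSpace :=
    UniformSpace.toTopologicalSpace_comap
  haveI hUAG : @IsUniformAddGroup (LinearMap.range p.toLinearMap) uR _ :=
    IsUniformAddGroup.comap e.symm
  -- the candidate map as a linear map
  let m : Y →ₗ[ℝ] ↥(LinearMap.range p.toLinearMap) :=
    LinearMap.codRestrict (LinearMap.range p.toLinearMap) j hsub
  -- the comparison map from H
  let ψ : ↥H →ₗ[ℝ] ↥(LinearMap.range p.toLinearMap) :=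
    LinearMap.codRestrict (LinearMap.range p.toLinearMap)
      (p.toLinearMap.comp ((LinearMap.fst ℝ E Y).comp H.subtype))
      (fun q => LinearMap.mem_range_self _ _)
  have hψe : ∀ q : ↥H, e.symm (ψ q) = K.mkQ q.val.1 := by
    intro q
    have h1 : ((e (K.mkQ q.val.1)) : F) = p q.val.1 :=
      p.toLinearMap.quotKerEquivRange_apply_mk q.val.1
    have h2 : e (K.mkQ q.val.1) = ψ q := by
      apply Subtype.ext
      rw [h1]
      rfl
    rw [← h2, LinearEquiv.symm_apply_apply]
  have hψcont : Continuous (ψ : ↥H → ↥(LinearMap.range p.toLinearMap)) := by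
    rw [continuous_iff_le_induced, htop, induced_compose]
    rw [← continuous_iff_le_induced]
    have : (fun q : ↥H => e.symm (ψ q)) = fun q : ↥H => K.mkQ q.val.1 := funext hψe
    show Continuous fun q : ↥H => e.symm (ψ q)
    rw [this]
    exact continuous_quot_mk.comp (continuous_fst.comp continuous_subtype_val)
  -- continuity of m at 0, hence everywhere
  have hm : Continuous (m : Y → ↥(LinearMap.range p.toLinearMap)) := by
    apply continuous_of_continuousAt_zero m
    rw [ContinuousAt, map_zero]
    rw [Filter.tendsto_def]
    intro N hN
    have hψN : (ψ : ↥H → _) ⁻¹' N ∈ 𝓝 (0 : ↥H) := by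
      refine hψcont.continuousAt.preimage_mem_nhds ?_
      rwa [map_zero]
    have himg := step2 (fibProj p j) hπcont hnm hψN
    refine Filter.mem_of_superset himg ?_
    rintro _ ⟨q, hq, rfl⟩
    have hmem : p q.val.1 = j q.val.2 := (mem_fibSub p j).1 q.2
    have : m (fibProj p j q) = ψ q := by
      apply Subtype.ext
      show j q.val.2 = p q.val.1
      rw [hmem]
    rw [Set.mem_preimage, this]
    exact hq
  exact hm
end Construction

/-- If `F` is an (LF)-space, i.e. a Hausdorff locally convex space which is the union of the
ranges of a sequence of continuous linear maps `p i : Ei i → F` from Fréchet spaces, then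
there is a countable family `G i` of Fréchet subspaces of `F` with `G i` equal (as a set) to
the range of `p i`, covering `F`, and cofinal among all Fréchet subspaces of `F`: every
Fréchet subspace `Gt` of `F` is contained in some `G i` with continuous inclusion. -/
theorem lf_space_frechetSubspace_cofinal_family
    (F : Type*) [AddCommGroup F] [Module ℝ F] [TopologicalSpace F] [IsTopologicalAddGroup F]
    [ContinuousSMul ℝ F] [LocallyConvexSpace ℝ F] [T2Space F]
    (Ei : ℕ → Type*) [∀ i, AddCommGroup (Ei i)] [∀ i, Module ℝ (Ei i)]
    [∀ i, UniformSpace (Ei i)] [∀ i, IsUniformAddGroup (Ei i)] [∀ i, ContinuousSMul ℝ (Ei i)]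
    [∀ i, LocallyConvexSpace ℝ (Ei i)] [∀ i, T2Space (Ei i)] [∀ i, CompleteSpace (Ei i)]
    [∀ i, TopologicalSpace.MetrizableSpace (Ei i)]
    (p : ∀ i, Ei i →L[ℝ] F)
    (hcover : ∀ x : F, ∃ i, x ∈ Set.range (p i)) :
    ∃ G : ℕ → FrechetSubspace F,
      (∀ i, ((G i).toSubmodule : Set F) = Set.range (p i)) ∧
      (∀ x : F, ∃ i, x ∈ (G i).toSubmodule) ∧
      (∀ Gt : FrechetSubspace F,
        ∃ i, ∃ h : (Gt.toSubmodule : Set F) ⊆ ((G i).toSubmodule : Set F),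
          @Continuous _ _ Gt.uniformSpace.toTopologicalSpace
            (G i).uniformSpace.toTopologicalSpace (Set.inclusion h)) := by
  refine ⟨fun i => rangeFrechet (p i), fun i => rangeFrechet_set (p i), ?_, ?_⟩
  · intro x
    obtain ⟨i, hi⟩ := hcover x
    refine ⟨i, ?_⟩
    have h2 : x ∈ ((LinearMap.range (p i).toLinearMap : Submodule ℝ F) : Set F) := by
      rw [rangeFrechet_set]; exact hi
    exact h2
  · intro Gt
    -- endow the subtype with the Fréchet structure of `Gt`
    letI : UniformSpace ↥Gt.toSubmodule := Gt.uniformSpace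
    letI : TopologicalSpace ↥Gt.toSubmodule := Gt.uniformSpace.toTopologicalSpace
    haveI : IsUniformAddGroup ↥Gt.toSubmodule := Gt.uniformAddGroup
    haveI : ContinuousSMul ℝ ↥Gt.toSubmodule := Gt.continuousSMul
    haveI : T2Space ↥Gt.toSubmodule := Gt.t2
    haveI : CompleteSpace ↥Gt.toSubmodule := Gt.complete
    haveI : TopologicalSpace.MetrizableSpace ↥Gt.toSubmodule := Gt.metrizable
    haveI : (𝓤 ↥Gt.toSubmodule).IsCountablyGenerated := by
      rw [uniformity_eq_comap_nhds_zero]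
      exact Filter.comap.isCountablyGenerated _ _
    set j : ↥Gt.toSubmodule →ₗ[ℝ] F := Gt.toSubmodule.subtype with hj
    have hjcont : Continuous j := Gt.continuous_val
    -- the ranges of the fiber projections cover the Baire space `Gt`
    have hcov : (Set.univ : Set ↥Gt.toSubmodule) =
        ⋃ i, Set.range (fibProj (p i) j) := by
      apply Set.eq_of_subset_of_subset
      · intro g _
        obtain ⟨i, x, hx⟩ := hcover g.val
        refine Set.mem_iUnion.2 ⟨i, ⟨⟨(x, g), ?_⟩, rfl⟩⟩
        rw [mem_fibSub]
        exact hx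
      · exact Set.subset_univ _
    have hex : ∃ i, ¬ IsMeagre (Set.range (fibProj (p i) j)) := by
      by_contra hall
      push_neg at hall
      have hmeagre : IsMeagre (Set.univ : Set ↥Gt.toSubmodule) := by
        rw [hcov]
        exact isMeagre_iUnion hall
      have hres : (∅ : Set ↥Gt.toSubmodule) ∈ residual _ := by
        have h3 := hmeagre
        rwa [IsMeagre, Set.compl_univ] at h3
      have hdense : Dense (∅ : Set ↥Gt.toSubmodule) := dense_of_mem_residual hres
      have : (0 : ↥Gt.toSubmodule) ∈ closure (∅ : Set ↥Gt.toSubmodule) :=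
        hdense _
      simpa using this
    obtain ⟨i, hnm⟩ := hex
    obtain ⟨hsub, hcont⟩ := cofinal_step (p i) j hjcont hnm
    refine ⟨i, fun v hv => hsub ⟨v, hv⟩, ?_⟩
    exact hcont
end

section
/- Let X and Y be sets, and let F and G be locally convex spaces of functions on X and Y respectively. Let b : F' × G' → ℝ be a bilinear form on the continuous duals that is separately continuous when F' and G' carry their weak-* topologies, and define h : X × Y → ℝ by h(x,y) = b(δ_x, δ_y). Then for every x ∈ X the function y ↦ h(x,y) belongs to G, and for every continuous linear functional v on G the function x ↦ v(h(x,·)) belongs to F. -/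
open Filter Topology

/-- The canonical evaluation map from `E` to the algebraic dual of its continuous dual. -/
def evalDD (E : Type*) [AddCommGroup E] [Module ℝ E] [TopologicalSpace E] :
    E →ₗ[ℝ] ((E →L[ℝ] ℝ) →ₗ[ℝ] ℝ) where
  toFun e :=
    { toFun := fun v => v e
      map_add' := fun u v => rfl
      map_smul' := fun c v => rfl }
  map_add' e₁ e₂ := by ext v; simp
  map_smul' c e := by ext v; simp

/-- Every weak-* continuous linear functional on the continuous dual is evaluation
at a point of the original space. -/
lemma exists_eval_of_weakStar_continuous {E : Type*} [AddCommGroup E] [Module ℝ E]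
    [TopologicalSpace E] (φ : (E →L[ℝ] ℝ) →ₗ[ℝ] ℝ)
    (hφ : Continuous fun v : WeakDual ℝ E => φ v) :
    ∃ e : E, ∀ v : E →L[ℝ] ℝ, φ v = v e := by
  -- the preimage of (-1,1) is weak-* open
  have hU : @IsOpen (WeakDual ℝ E) (instTopologicalSpaceWeakDual ℝ E)
      ((fun v : WeakDual ℝ E => φ v) ⁻¹' Set.Ioo (-1) 1) :=
    hφ.isOpen_preimage _ isOpen_Ioo
  obtain ⟨V, hVopen, hVU⟩ :
      ∃ V : Set (E → ℝ), IsOpen V ∧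
        (fun (v : WeakDual ℝ E) (e : E) => v e) ⁻¹' V =
          ((fun v : WeakDual ℝ E => φ v) ⁻¹' Set.Ioo (-1) 1) :=
    isOpen_induced_iff.mp hU
  have h0V : (fun _ : E => (0 : ℝ)) ∈ V := by
    have : (0 : WeakDual ℝ E) ∈ (fun v : WeakDual ℝ E => φ v) ⁻¹' Set.Ioo (-1) 1 := by
      change φ (0 : E →L[ℝ] ℝ) ∈ Set.Ioo (-1) 1
      simp [map_zero φ]
    rw [← hVU] at this
    exact this
  obtain ⟨I, u, hu, hIV⟩ := isOpen_pi_iff.mp hVopen _ h0V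
  -- `φ` vanishes on the common kernel of the evaluations at points of `I`
  have hker : ∀ v : E →L[ℝ] ℝ, (∀ e ∈ I, v e = 0) → φ v = 0 := by
    intro v hv
    by_contra hne
    obtain ⟨c, hc⟩ : ∃ c : ℝ, 1 ≤ |c * φ v| := ⟨(φ v)⁻¹, by
      rw [inv_mul_cancel₀ hne]; simp⟩
    have hmem : (c • v : WeakDual ℝ E) ∈
        (fun v : WeakDual ℝ E => φ v) ⁻¹' Set.Ioo (-1) 1 := by
      rw [← hVU]
      refine Set.mem_preimage.mpr (hIV ?_)
      intro e he
      have : (c • v) e = 0 := by simp [hv e he]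
      exact (congrArg (· ∈ u e) this).mpr (hu e he).2
    have : |φ (c • v)| < 1 := abs_lt.mpr hmem
    rw [map_smul] at this
    exact absurd (lt_of_le_of_lt hc this) (lt_irrefl _)
  -- conclude `φ` is in the span of evaluations, hence an evaluation
  have hspan : φ ∈ Submodule.span ℝ (Set.range fun e : I => evalDD E (e : E)) := by
    apply mem_span_of_iInf_ker_le_ker
    intro v hv
    simp only [Submodule.mem_iInf, LinearMap.mem_ker] at hv ⊢
    exact hker v fun e he => hv ⟨e, he⟩
  have hrange : φ ∈ LinearMap.range (evalDD E) := by
    refine Submodule.span_le.mpr ?_ hspan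
    rintro _ ⟨e, rfl⟩
    exact ⟨e, rfl⟩
  obtain ⟨e, he⟩ := hrange
  exact ⟨e, fun v => by rw [← he]; rfl⟩

/-- Let `F`, `G` be Hausdorff locally convex spaces of functions on sets `X`, `Y`
(realized by injective linear maps `ιF`, `ιG` with continuous evaluation functionals
`δF x`, `δG y`). Let `b` be a bilinear form on `F' × G'` which is separately continuous
for the weak-* topologies, and set `h (x, y) = b (δF x) (δG y)`. Then every `h(x,·)`
belongs to `G`, and for every continuous linear functional `v` on `G` the function
`x ↦ v (h(x,·))` belongs to `F`. -/
theorem weakStar_bilinear_gives_kernel_function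
    (X Y : Type*)
    (F : Type*) [AddCommGroup F] [Module ℝ F] [TopologicalSpace F] [IsTopologicalAddGroup F]
    [ContinuousSMul ℝ F] [LocallyConvexSpace ℝ F] [T2Space F]
    (G : Type*) [AddCommGroup G] [Module ℝ G] [TopologicalSpace G] [IsTopologicalAddGroup G]
    [ContinuousSMul ℝ G] [LocallyConvexSpace ℝ G] [T2Space G]
    (ιF : F →ₗ[ℝ] (X → ℝ)) (hιF : Function.Injective ιF)
    (hevF : ∀ x : X, Continuous fun f : F => ιF f x)
    (ιG : G →ₗ[ℝ] (Y → ℝ)) (hιG : Function.Injective ιG)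
    (hevG : ∀ y : Y, Continuous fun g : G => ιG g y)
    (δF : X → F →L[ℝ] ℝ) (hδF : ∀ x f, δF x f = ιF f x)
    (δG : Y → G →L[ℝ] ℝ) (hδG : ∀ y g, δG y g = ιG g y)
    (b : (F →L[ℝ] ℝ) →ₗ[ℝ] (G →L[ℝ] ℝ) →ₗ[ℝ] ℝ)
    (hb₁ : ∀ u : F →L[ℝ] ℝ, Continuous fun v : WeakDual ℝ G => b u v)
    (hb₂ : ∀ v : G →L[ℝ] ℝ, Continuous fun u : WeakDual ℝ F => b u v) :
    ∃ g : X → G, (∀ x y, ιG (g x) y = b (δF x) (δG y)) ∧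
      ∀ v : G →L[ℝ] ℝ, ∃ f : F, ∀ x, ιF f x = v (g x) := by
  -- For each `x`, the functional `v ↦ b (δF x) v` is weak-* continuous, hence an evaluation.
  choose g hg using fun x : X =>
    exists_eval_of_weakStar_continuous (b (δF x)) (hb₁ (δF x))
  refine ⟨g, fun x y => ?_, fun v => ?_⟩
  · rw [← hδG y (g x), ← hg x (δG y)]
  · -- The functional `u ↦ b u v` is weak-* continuous, hence an evaluation at some `f`.
    obtain ⟨f, hf⟩ := exists_eval_of_weakStar_continuous (b.flip v) (by
      exact hb₂ v)
    refine ⟨f, fun x => ?_⟩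
    have := hf (δF x)
    simp only [LinearMap.flip_apply] at this
    rw [← hδF x f, ← this, hg x v]
end

section
/- Let V₁ ⊆ ℝ^{k₁} and V₂ ⊆ ℝ^{k₂} be nonempty cones. Then for every N ∈ ℕ, every B' > 0, and all z₁ ∈ ℂ^{k₁}, z₂ ∈ ℂ^{k₂}: M^{V₁×V₂}_{N,2B'}(z₁,z₂) ≤ M^{V₁}_{N,B'}(z₁) · M^{V₂}_{N,B'}(z₂), where V₁ × V₂ is regarded as a cone in ℝ^{k₁+k₂} with the uniform norm. -/
/-- The weight `M^U_{N,B'}(x+iy) = (1+|x|)^N exp(−β(B'|y|) − β(B'δ_U(x)))` on `ℂ^k`,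
where `ℝ^k` carries the sup norm and `δ_U` is the distance to `U`. -/
noncomputable def Mnorm {k : ℕ} (β : ℝ → ℝ) (U : Set (Fin k → ℝ)) (N : ℕ) (B' : ℝ)
    (z : Fin k → ℂ) : ℝ :=
  (1 + ‖(fun j => (z j).re : Fin k → ℝ)‖) ^ N *
    Real.exp (-β (B' * ‖(fun j => (z j).im : Fin k → ℝ)‖)
      - β (B' * Metric.infDist (fun j => (z j).re : Fin k → ℝ) U))

/-- The weight `M^U_{N,B'}` on `ℂ^{k₁} × ℂ^{k₂} ≅ ℂ^{k₁+k₂}`, for `U ⊆ ℝ^{k₁} × ℝ^{k₂}`;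
here `ℝ^{k₁} × ℝ^{k₂}` carries the sup norm `|(x₁,x₂)| = max (|x₁|, |x₂|)`. -/
noncomputable def MnormProd {k₁ k₂ : ℕ} (β : ℝ → ℝ)
    (U : Set ((Fin k₁ → ℝ) × (Fin k₂ → ℝ))) (N : ℕ) (B' : ℝ)
    (z : (Fin k₁ → ℂ) × (Fin k₂ → ℂ)) : ℝ :=
  (1 + ‖((fun j => (z.1 j).re, fun j => (z.2 j).re) : (Fin k₁ → ℝ) × (Fin k₂ → ℝ))‖) ^ N *
    Real.exp
      (-β (B' * ‖((fun j => (z.1 j).im, fun j => (z.2 j).im) :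
          (Fin k₁ → ℝ) × (Fin k₂ → ℝ))‖)
        - β (B' * Metric.infDist
            ((fun j => (z.1 j).re, fun j => (z.2 j).re) : (Fin k₁ → ℝ) × (Fin k₂ → ℝ)) U))

/-- Key inequality: `β s + β t ≤ β (2 max(s,t))` for a nondecreasing convex `β` with `β 0 = 0`. -/
lemma beta_add_le {β : ℝ → ℝ} (hβm : MonotoneOn β (Set.Ici 0))
    (hβconv : ConvexOn ℝ (Set.Ici 0) β) (hβ0 : β 0 = 0)
    {s t : ℝ} (hs : 0 ≤ s) (ht : 0 ≤ t) : β s + β t ≤ β (2 * max s t) := by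
  set m := max s t with hm
  have hm0 : (0:ℝ) ≤ m := le_trans hs (le_max_left s t)
  have h1 : β s ≤ β m := hβm hs hm0 (le_max_left s t)
  have h2 : β t ≤ β m := hβm ht hm0 (le_max_right s t)
  have h3 : 2 * β m ≤ β (2 * m) := by
    have := hβconv.2 (Set.mem_Ici.2 (le_refl (0:ℝ)))
      (Set.mem_Ici.2 (by linarith : (0:ℝ) ≤ 2 * m))
      (by norm_num : (0:ℝ) ≤ (1/2:ℝ)) (by norm_num : (0:ℝ) ≤ (1/2:ℝ)) (by norm_num)
    simp only [smul_eq_mul, hβ0] at this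
    have hme : (1/2 : ℝ) * 0 + (1/2 : ℝ) * (2 * m) = m := by ring
    rw [hme] at this
    linarith
  linarith

/-- The component inf-distance is at most the inf-distance to the product set. -/
lemma infDist_fst_le {α β : Type*} [PseudoMetricSpace α] [PseudoMetricSpace β]
    {s : Set α} {t : Set β} (hs : s.Nonempty) (ht : t.Nonempty) (x₁ : α) (x₂ : β) :
    Metric.infDist x₁ s ≤ Metric.infDist (x₁, x₂) (s ×ˢ t) := by
  by_contra h
  push_neg at h
  obtain ⟨y, hy, hd⟩ := (Metric.infDist_lt_iff (hs.prod ht)).1 h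
  have h1 : Metric.infDist x₁ s ≤ dist x₁ y.1 := Metric.infDist_le_dist_of_mem hy.1
  have h2 : dist x₁ y.1 ≤ dist (x₁, x₂) y := le_max_left _ _
  linarith

lemma infDist_snd_le {α β : Type*} [PseudoMetricSpace α] [PseudoMetricSpace β]
    {s : Set α} {t : Set β} (hs : s.Nonempty) (ht : t.Nonempty) (x₁ : α) (x₂ : β) :
    Metric.infDist x₂ t ≤ Metric.infDist (x₁, x₂) (s ×ˢ t) := by
  by_contra h
  push_neg at h
  obtain ⟨y, hy, hd⟩ := (Metric.infDist_lt_iff (hs.prod ht)).1 h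
  have h1 : Metric.infDist x₂ t ≤ dist x₂ y.2 := Metric.infDist_le_dist_of_mem hy.2
  have h2 : dist x₂ y.2 ≤ dist (x₁, x₂) y := le_max_right _ _
  linarith

set_option maxHeartbeats 1000000 in
/-- For nonempty cones `V₁ ⊆ ℝ^{k₁}`, `V₂ ⊆ ℝ^{k₂}`:
`M^{V₁×V₂}_{N,2B'}(z₁,z₂) ≤ M^{V₁}_{N,B'}(z₁) · M^{V₂}_{N,B'}(z₂)`. -/
theorem MnormProd_le_mul_Mnorm {k₁ k₂ : ℕ} (β : ℝ → ℝ)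
    (hβc : ContinuousOn β (Set.Ici 0)) (hβm : MonotoneOn β (Set.Ici 0))
    (hβconv : ConvexOn ℝ (Set.Ici 0) β) (hβ0 : β 0 = 0)
    (hβtop : Filter.Tendsto β Filter.atTop Filter.atTop)
    (V₁ : Set (Fin k₁ → ℝ)) (hV₁ : V₁.Nonempty)
    (hV₁cone : ∀ c : ℝ, 0 < c → ∀ x ∈ V₁, c • x ∈ V₁)
    (V₂ : Set (Fin k₂ → ℝ)) (hV₂ : V₂.Nonempty)
    (hV₂cone : ∀ c : ℝ, 0 < c → ∀ x ∈ V₂, c • x ∈ V₂)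
    (N : ℕ) (B' : ℝ) (hB' : 0 < B') (z₁ : Fin k₁ → ℂ) (z₂ : Fin k₂ → ℂ) :
    MnormProd β (V₁ ×ˢ V₂) N (2 * B') (z₁, z₂) ≤
      Mnorm β V₁ N B' z₁ * Mnorm β V₂ N B' z₂ := by
  set x₁ : Fin k₁ → ℝ := fun j => (z₁ j).re with hx₁
  set x₂ : Fin k₂ → ℝ := fun j => (z₂ j).re with hx₂
  set y₁ : Fin k₁ → ℝ := fun j => (z₁ j).im with hy₁
  set y₂ : Fin k₂ → ℝ := fun j => (z₂ j).im with hy₂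
  have ha : (0:ℝ) ≤ ‖x₁‖ := norm_nonneg _
  have hb : (0:ℝ) ≤ ‖x₂‖ := norm_nonneg _
  have hd₁0 : (0:ℝ) ≤ Metric.infDist x₁ V₁ := Metric.infDist_nonneg
  have hd₂0 : (0:ℝ) ≤ Metric.infDist x₂ V₂ := Metric.infDist_nonneg
  -- norm of the product
  have hnx : ‖((x₁, x₂) : (Fin k₁ → ℝ) × (Fin k₂ → ℝ))‖ = max ‖x₁‖ ‖x₂‖ := rfl
  have hny : ‖((y₁, y₂) : (Fin k₁ → ℝ) × (Fin k₂ → ℝ))‖ = max ‖y₁‖ ‖y₂‖ := rfl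
  set D := Metric.infDist ((x₁, x₂) : (Fin k₁ → ℝ) × (Fin k₂ → ℝ)) (V₁ ×ˢ V₂) with hD
  have hD1 : Metric.infDist x₁ V₁ ≤ D := infDist_fst_le hV₁ hV₂ x₁ x₂
  have hD2 : Metric.infDist x₂ V₂ ≤ D := infDist_snd_le hV₁ hV₂ x₁ x₂
  have hD0 : (0:ℝ) ≤ D := Metric.infDist_nonneg
  -- polynomial part
  have hpow : (1 + ‖((x₁, x₂) : (Fin k₁ → ℝ) × (Fin k₂ → ℝ))‖) ^ N ≤
      ((1 + ‖x₁‖) * (1 + ‖x₂‖)) ^ N := by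
    apply pow_le_pow_left₀
    · rw [hnx]; positivity
    · rw [hnx]
      rcases max_cases ‖x₁‖ ‖x₂‖ with ⟨h, _⟩ | ⟨h, _⟩ <;> rw [h] <;> nlinarith
  -- exponential part
  have hy_ineq : β (B' * ‖y₁‖) + β (B' * ‖y₂‖) ≤
      β (2 * B' * ‖((y₁, y₂) : (Fin k₁ → ℝ) × (Fin k₂ → ℝ))‖) := by
    have key := beta_add_le hβm hβconv hβ0
      (by positivity : (0:ℝ) ≤ B' * ‖y₁‖) (by positivity : (0:ℝ) ≤ B' * ‖y₂‖)
    have hmm : max (B' * ‖y₁‖) (B' * ‖y₂‖) = B' * max ‖y₁‖ ‖y₂‖ :=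
      (mul_max_of_nonneg _ _ hB'.le).symm
    have : 2 * max (B' * ‖y₁‖) (B' * ‖y₂‖) =
        2 * B' * ‖((y₁, y₂) : (Fin k₁ → ℝ) × (Fin k₂ → ℝ))‖ := by
      rw [hmm, hny]; ring
    rwa [this] at key
  have hd_ineq : β (B' * Metric.infDist x₁ V₁) + β (B' * Metric.infDist x₂ V₂) ≤
      β (2 * B' * D) := by
    have key := beta_add_le hβm hβconv hβ0
      (by positivity : (0:ℝ) ≤ B' * Metric.infDist x₁ V₁)
      (by positivity : (0:ℝ) ≤ B' * Metric.infDist x₂ V₂)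
    refine key.trans (hβm ?_ ?_ ?_)
    · refine Set.mem_Ici.2 ?_
      rcases max_cases (B' * Metric.infDist x₁ V₁) (B' * Metric.infDist x₂ V₂) with
        ⟨h, _⟩ | ⟨h, _⟩ <;> rw [h] <;> positivity
    · exact Set.mem_Ici.2 (by positivity)
    · rcases max_cases (B' * Metric.infDist x₁ V₁) (B' * Metric.infDist x₂ V₂) with
        ⟨h, _⟩ | ⟨h, _⟩ <;> rw [h] <;> nlinarith
  have hexp : Real.exp (-β (2 * B' * ‖((y₁, y₂) : (Fin k₁ → ℝ) × (Fin k₂ → ℝ))‖)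
        - β (2 * B' * D)) ≤
      Real.exp (-β (B' * ‖y₁‖) - β (B' * Metric.infDist x₁ V₁)) *
        Real.exp (-β (B' * ‖y₂‖) - β (B' * Metric.infDist x₂ V₂)) := by
    rw [← Real.exp_add]
    apply Real.exp_le_exp.2
    linarith
  -- assemble
  rw [MnormProd, Mnorm, Mnorm]
  calc (1 + ‖((x₁, x₂) : (Fin k₁ → ℝ) × (Fin k₂ → ℝ))‖) ^ N *
        Real.exp (-β (2 * B' * ‖((y₁, y₂) : (Fin k₁ → ℝ) × (Fin k₂ → ℝ))‖) - β (2 * B' * D))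
      ≤ ((1 + ‖x₁‖) * (1 + ‖x₂‖)) ^ N *
        (Real.exp (-β (B' * ‖y₁‖) - β (B' * Metric.infDist x₁ V₁)) *
          Real.exp (-β (B' * ‖y₂‖) - β (B' * Metric.infDist x₂ V₂))) := by
        apply mul_le_mul hpow hexp (Real.exp_pos _).le (by positivity)
    _ = ((1 + ‖x₁‖) ^ N * Real.exp (-β (B' * ‖y₁‖) - β (B' * Metric.infDist x₁ V₁))) *
        ((1 + ‖x₂‖) ^ N * Real.exp (-β (B' * ‖y₂‖) - β (B' * Metric.infDist x₂ V₂))) := by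
        rw [mul_pow]; ring
end

section
/- Let V₁ ⊆ ℝ^{k₁} and V₂ ⊆ ℝ^{k₂} be nonempty cones, and let f : ℂ^{k₁} → ℂ and g : ℂ^{k₂} → ℂ be entire functions. Define h : ℂ^{k₁+k₂} → ℂ by h(z₁,z₂) = f(z₁)g(z₂). Then h is entire, and for every N ∈ ℕ and B' > 0 one has ‖h‖_{V₁×V₂,N,2B'} ≤ ‖f‖_{V₁,N,B'} · ‖g‖_{V₂,N,B'}. In particular, if B > 0 and ‖f‖_{V₁,N,B'} < ∞ and ‖g‖_{V₂,N,B'} < ∞ for all N ∈ ℕ and B' > B, then ‖h‖_{V₁×V₂,N,B''} < ∞ for all N ∈ ℕ and B'' > 2B (i.e., f ∈ E^{β,B}(V₁) and g ∈ E^{β,B}(V₂) imply h ∈ E^{β,2B}(V₁×V₂)). -/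
open scoped ENNReal

/-- The (possibly infinite) norm `‖f‖_{U,N,B'} = sup_z M^U_{N,B'}(z) |f(z)|`. -/
noncomputable def Enorm {k : ℕ} (β : ℝ → ℝ) (U : Set (Fin k → ℝ)) (N : ℕ) (B' : ℝ)
    (f : (Fin k → ℂ) → ℂ) : ℝ≥0∞ :=
  ⨆ z : Fin k → ℂ, ENNReal.ofReal (Mnorm β U N B' z * ‖f z‖)

/-- The norm `‖h‖_{U,N,B'}` for functions on `ℂ^{k₁} × ℂ^{k₂} ≅ ℂ^{k₁+k₂}`. -/
noncomputable def EnormProd {k₁ k₂ : ℕ} (β : ℝ → ℝ)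
    (U : Set ((Fin k₁ → ℝ) × (Fin k₂ → ℝ))) (N : ℕ) (B' : ℝ)
    (h : (Fin k₁ → ℂ) × (Fin k₂ → ℂ) → ℂ) : ℝ≥0∞ :=
  ⨆ z : (Fin k₁ → ℂ) × (Fin k₂ → ℂ), ENNReal.ofReal (MnormProd β U N B' z * ‖h z‖)

theorem beta_superadd (β : ℝ → ℝ)
    (hβconv : ConvexOn ℝ (Set.Ici 0) β) (hβ0 : β 0 = 0)
    {a b : ℝ} (ha : 0 ≤ a) (hb : 0 ≤ b) : β a + β b ≤ β (a + b) := by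
  rcases eq_or_lt_of_le ha with rfl | ha'
  · simp [hβ0]
  rcases eq_or_lt_of_le hb with rfl | hb'
  · simp [hβ0]
  have hab : 0 < a + b := by linarith
  have h1 : β a ≤ (a / (a + b)) * β (a + b) := by
    have := hβconv.2 (Set.mem_Ici.mpr hab.le) (Set.mem_Ici.mpr (le_refl (0:ℝ)))
      (show (0:ℝ) ≤ a / (a + b) by positivity) (show (0:ℝ) ≤ b / (a + b) by positivity)
      (by field_simp)
    simp only [smul_eq_mul, mul_zero, hβ0, add_zero] at this
    have harg : a / (a + b) * (a + b) = a := by field_simp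
    rw [harg] at this
    linarith
  have h2 : β b ≤ (b / (a + b)) * β (a + b) := by
    have := hβconv.2 (Set.mem_Ici.mpr hab.le) (Set.mem_Ici.mpr (le_refl (0:ℝ)))
      (show (0:ℝ) ≤ b / (a + b) by positivity) (show (0:ℝ) ≤ a / (a + b) by positivity)
      (by field_simp; ring)
    simp only [smul_eq_mul, mul_zero, hβ0, add_zero] at this
    have harg : b / (a + b) * (a + b) = b := by field_simp
    rw [harg] at this
    linarith
  have heq : (a / (a + b)) * β (a + b) + (b / (a + b)) * β (a + b) = β (a + b) := by
    field_simp
  linarith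

theorem infDist_fst_le' {k₁ k₂ : ℕ} (x₁ : Fin k₁ → ℝ) (x₂ : Fin k₂ → ℝ) (V₁ : Set (Fin k₁ → ℝ))
    (V₂ : Set (Fin k₂ → ℝ)) (hV₁ : V₁.Nonempty) (hV₂ : V₂.Nonempty) :
    Metric.infDist x₁ V₁ ≤ Metric.infDist (x₁, x₂) (V₁ ×ˢ V₂) := by
  have hE : Metric.infEDist x₁ V₁ ≤ Metric.infEDist (x₁, x₂) (V₁ ×ˢ V₂) := by
    rw [EMetric.le_infEdist]
    rintro ⟨u, v⟩ ⟨hu, hv⟩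
    exact le_trans (EMetric.infEdist_le_edist_of_mem hu)
      (by rw [Prod.edist_eq]; exact le_max_left _ _)
  rw [Metric.infDist, Metric.infDist]
  exact ENNReal.toReal_mono (Metric.infEdist_ne_top (hV₁.prod hV₂)) hE

theorem infDist_snd_le' {k₁ k₂ : ℕ} (x₁ : Fin k₁ → ℝ) (x₂ : Fin k₂ → ℝ) (V₁ : Set (Fin k₁ → ℝ))
    (V₂ : Set (Fin k₂ → ℝ)) (hV₁ : V₁.Nonempty) (hV₂ : V₂.Nonempty) :
    Metric.infDist x₂ V₂ ≤ Metric.infDist (x₁, x₂) (V₁ ×ˢ V₂) := by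
  have hE : Metric.infEDist x₂ V₂ ≤ Metric.infEDist (x₁, x₂) (V₁ ×ˢ V₂) := by
    rw [EMetric.le_infEdist]
    rintro ⟨u, v⟩ ⟨hu, hv⟩
    exact le_trans (EMetric.infEdist_le_edist_of_mem hv)
      (by rw [Prod.edist_eq]; exact le_max_right _ _)
  rw [Metric.infDist, Metric.infDist]
  exact ENNReal.toReal_mono (Metric.infEdist_ne_top (hV₁.prod hV₂)) hE

theorem Mnorm_nonneg {k : ℕ} (β : ℝ → ℝ) (U : Set (Fin k → ℝ)) (N : ℕ) (B' : ℝ)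
    (z : Fin k → ℂ) : 0 ≤ Mnorm β U N B' z := by
  unfold Mnorm; positivity

/-- If `f`, `g` are entire and `h (z₁, z₂) = f z₁ * g z₂`, then `h` is entire and
`‖h‖_{V₁×V₂,N,2B'} ≤ ‖f‖_{V₁,N,B'} ‖g‖_{V₂,N,B'}`; in particular `f ∈ E^{β,B}(V₁)` and
`g ∈ E^{β,B}(V₂)` imply `h ∈ E^{β,2B}(V₁ × V₂)`. -/
theorem mul_mem_EbetaProd {k₁ k₂ : ℕ} (β : ℝ → ℝ)
    (hβc : ContinuousOn β (Set.Ici 0)) (hβm : MonotoneOn β (Set.Ici 0))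
    (hβconv : ConvexOn ℝ (Set.Ici 0) β) (hβ0 : β 0 = 0)
    (hβtop : Filter.Tendsto β Filter.atTop Filter.atTop)
    (V₁ : Set (Fin k₁ → ℝ)) (hV₁ : V₁.Nonempty)
    (hV₁cone : ∀ c : ℝ, 0 < c → ∀ x ∈ V₁, c • x ∈ V₁)
    (V₂ : Set (Fin k₂ → ℝ)) (hV₂ : V₂.Nonempty)
    (hV₂cone : ∀ c : ℝ, 0 < c → ∀ x ∈ V₂, c • x ∈ V₂)
    (f : (Fin k₁ → ℂ) → ℂ) (hf : Differentiable ℂ f)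
    (g : (Fin k₂ → ℂ) → ℂ) (hg : Differentiable ℂ g)
    (h : (Fin k₁ → ℂ) × (Fin k₂ → ℂ) → ℂ) (hh : ∀ z₁ z₂, h (z₁, z₂) = f z₁ * g z₂) :
    Differentiable ℂ h ∧
    (∀ (N : ℕ) (B' : ℝ), 0 < B' →
      EnormProd β (V₁ ×ˢ V₂) N (2 * B') h ≤ Enorm β V₁ N B' f * Enorm β V₂ N B' g) ∧
    (∀ B : ℝ, 0 < B →
      (∀ (N : ℕ) (B' : ℝ), B < B' → Enorm β V₁ N B' f < ⊤) →
      (∀ (N : ℕ) (B' : ℝ), B < B' → Enorm β V₂ N B' g < ⊤) →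
      ∀ (N : ℕ) (B'' : ℝ), 2 * B < B'' → EnormProd β (V₁ ×ˢ V₂) N B'' h < ⊤) := by
  have hhe : h = fun z => f z.1 * g z.2 := funext fun z => hh z.1 z.2
  have hdiff : Differentiable ℂ h := by
    rw [hhe]; exact (hf.comp differentiable_fst).mul (hg.comp differentiable_snd)
  have key : ∀ (N : ℕ) (B' : ℝ), 0 < B' →
      EnormProd β (V₁ ×ˢ V₂) N (2 * B') h ≤ Enorm β V₁ N B' f * Enorm β V₂ N B' g := by
    intro N B' hB'
    refine iSup_le fun z => ?_
    set x₁ : Fin k₁ → ℝ := fun j => (z.1 j).re with hx₁def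
    set x₂ : Fin k₂ → ℝ := fun j => (z.2 j).re with hx₂def
    set y₁ : Fin k₁ → ℝ := fun j => (z.1 j).im with hy₁def
    set y₂ : Fin k₂ → ℝ := fun j => (z.2 j).im with hy₂def
    set d₁ : ℝ := Metric.infDist x₁ V₁ with hd₁def
    set d₂ : ℝ := Metric.infDist x₂ V₂ with hd₂def
    set dp : ℝ := Metric.infDist (x₁, x₂) (V₁ ×ˢ V₂) with hdpdef
    have hd₁ : 0 ≤ d₁ := Metric.infDist_nonneg
    have hd₂ : 0 ≤ d₂ := Metric.infDist_nonneg
    have hdp : 0 ≤ dp := Metric.infDist_nonneg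
    have hpoint : MnormProd β (V₁ ×ˢ V₂) N (2 * B') z * ‖h z‖
        ≤ (Mnorm β V₁ N B' z.1 * ‖f z.1‖) *
          (Mnorm β V₂ N B' z.2 * ‖g z.2‖) := by
      have hz : h z = f z.1 * g z.2 := hh z.1 z.2
      rw [hz, norm_mul]
      unfold MnormProd Mnorm
      have hP : (1 + ‖(x₁, x₂)‖) ^ N ≤ (1 + ‖x₁‖) ^ N * (1 + ‖x₂‖) ^ N := by
        rw [← mul_pow]
        refine pow_le_pow_left₀ (by positivity) ?_ N
        have hm : ‖(x₁, x₂)‖ = max ‖x₁‖ ‖x₂‖ := Prod.norm_def _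
        rcases max_cases ‖x₁‖ ‖x₂‖ with ⟨hmx, _⟩ | ⟨hmx, _⟩ <;> rw [hm, hmx] <;>
          nlinarith [norm_nonneg x₁, norm_nonneg x₂]
      have hY : β (B' * ‖y₁‖) + β (B' * ‖y₂‖) ≤ β (2 * B' * ‖(y₁, y₂)‖) := by
        refine (beta_superadd β hβconv hβ0 (by positivity) (by positivity)).trans ?_
        refine hβm (Set.mem_Ici.mpr (by positivity)) (Set.mem_Ici.mpr (by positivity)) ?_
        have h1 : ‖y₁‖ ≤ ‖(y₁, y₂)‖ := by rw [Prod.norm_def]; exact le_max_left _ _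
        have h2 : ‖y₂‖ ≤ ‖(y₁, y₂)‖ := by rw [Prod.norm_def]; exact le_max_right _ _
        nlinarith
      have hD : β (B' * d₁) + β (B' * d₂) ≤ β (2 * B' * dp) := by
        refine (beta_superadd β hβconv hβ0 (by positivity) (by positivity)).trans ?_
        refine hβm (Set.mem_Ici.mpr (by positivity)) (Set.mem_Ici.mpr (by positivity)) ?_
        have h1 : d₁ ≤ dp := infDist_fst_le' x₁ x₂ V₁ V₂ hV₁ hV₂
        have h2 : d₂ ≤ dp := infDist_snd_le' x₁ x₂ V₁ V₂ hV₁ hV₂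
        nlinarith
      have hEexp : Real.exp (-β (2 * B' * ‖(y₁, y₂)‖) - β (2 * B' * dp))
          ≤ Real.exp (-β (B' * ‖y₁‖) - β (B' * d₁)) *
            Real.exp (-β (B' * ‖y₂‖) - β (B' * d₂)) := by
        rw [← Real.exp_add]
        exact Real.exp_le_exp.mpr (by linarith)
      have hPE := mul_le_mul hP hEexp (Real.exp_pos _).le (by positivity)
      calc (1 + ‖(x₁, x₂)‖) ^ N * Real.exp (-β (2 * B' * ‖(y₁, y₂)‖) - β (2 * B' * dp)) *
            (‖f z.1‖ * ‖g z.2‖)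
          ≤ ((1 + ‖x₁‖) ^ N * (1 + ‖x₂‖) ^ N *
              (Real.exp (-β (B' * ‖y₁‖) - β (B' * d₁)) *
               Real.exp (-β (B' * ‖y₂‖) - β (B' * d₂)))) *
            (‖f z.1‖ * ‖g z.2‖) :=
            mul_le_mul_of_nonneg_right hPE (by positivity)
        _ = ((1 + ‖x₁‖) ^ N * Real.exp (-β (B' * ‖y₁‖) - β (B' * d₁)) * ‖f z.1‖) *
            ((1 + ‖x₂‖) ^ N * Real.exp (-β (B' * ‖y₂‖) - β (B' * d₂)) * ‖g z.2‖) := by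
            ring
    calc ENNReal.ofReal (MnormProd β (V₁ ×ˢ V₂) N (2 * B') z * ‖h z‖)
        ≤ ENNReal.ofReal ((Mnorm β V₁ N B' z.1 * ‖f z.1‖) *
            (Mnorm β V₂ N B' z.2 * ‖g z.2‖)) := ENNReal.ofReal_le_ofReal hpoint
      _ = ENNReal.ofReal (Mnorm β V₁ N B' z.1 * ‖f z.1‖) *
            ENNReal.ofReal (Mnorm β V₂ N B' z.2 * ‖g z.2‖) :=
          ENNReal.ofReal_mul (mul_nonneg (Mnorm_nonneg _ _ _ _ _) (norm_nonneg _))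
      _ ≤ Enorm β V₁ N B' f * Enorm β V₂ N B' g :=
          mul_le_mul' (le_iSup (fun w => ENNReal.ofReal (Mnorm β V₁ N B' w * ‖f w‖)) z.1)
            (le_iSup (fun w => ENNReal.ofReal (Mnorm β V₂ N B' w * ‖g w‖)) z.2)
  refine ⟨hdiff, key, ?_⟩
  intro B hB hf' hg' N B'' hB''
  have h1 : B < B'' / 2 := by linarith
  have h2 : (0:ℝ) < B'' / 2 := by linarith
  have hk := key N (B'' / 2) h2
  rw [show 2 * (B'' / 2) = B'' by ring] at hk
  exact lt_of_le_of_lt hk (ENNReal.mul_lt_top (hf' N _ h1) (hg' N _ h1))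
end

section
/- Let U be a nonempty cone in ℝ^k and B > 0. Then the family M^{U,B} = {M^U_{N,B'} : N ∈ ℕ, B' > B} satisfies condition (II): for every N ∈ ℕ and B' > B there exist N' ∈ ℕ, B'' > B, ε > 0, and C > 0 such that M^U_{N,B'}(z) ≤ C · M^U_{N',B''}(z + ζ) for all z, ζ ∈ ℂ^k with |ζ| ≤ ε. -/
/-- **Condition (II) for the family `M^{U,B}`.**  For every `N ∈ ℕ` and `B' > B` there are
`N' ∈ ℕ`, `B'' > B`, `ε > 0` and `C > 0` such that
`M^U_{N,B'}(z) ≤ C · M^U_{N',B''}(z + ζ)` for all `z, ζ ∈ ℂ^k` with `|ζ| ≤ ε`. -/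
theorem Mnorm_condition_II {k : ℕ} (β : ℝ → ℝ)
    (hβc : ContinuousOn β (Set.Ici 0)) (hβm : MonotoneOn β (Set.Ici 0))
    (hβconv : ConvexOn ℝ (Set.Ici 0) β) (hβ0 : β 0 = 0)
    (hβtop : Filter.Tendsto β Filter.atTop Filter.atTop)
    (U : Set (Fin k → ℝ)) (hUne : U.Nonempty)
    (hUcone : ∀ c : ℝ, 0 < c → ∀ x ∈ U, c • x ∈ U)
    (B : ℝ) (hB : 0 < B) (N : ℕ) (B' : ℝ) (hB' : B < B') :
    ∃ (N' : ℕ) (B'' ε C : ℝ), B < B'' ∧ 0 < ε ∧ 0 < C ∧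
      ∀ z ζ : Fin k → ℂ, ‖ζ‖ ≤ ε →
        Mnorm β U N B' z ≤ C * Mnorm β U N' B'' (z + ζ) := by
  set B'' : ℝ := (B + B') / 2 with hB''def
  have hBB'' : B < B'' := by simp only [hB''def]; linarith
  have hB''B' : B'' < B' := by simp only [hB''def]; linarith
  have hB''pos : 0 < B'' := lt_trans hB hBB''
  have hB'pos : 0 < B' := lt_trans hB hB'
  set T : ℝ := B'' / (B' - B'') with hT
  have hTpos : 0 < T := div_pos hB''pos (by linarith)
  set K : ℝ := β (B'' * (T + 1)) with hK
  have hβnonneg : ∀ t : ℝ, 0 ≤ t → 0 ≤ β t := by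
    intro t ht
    have := hβm (Set.mem_Ici.mpr le_rfl) (Set.mem_Ici.mpr ht) ht
    rwa [hβ0] at this
  have hKnn : 0 ≤ K := hβnonneg _ (by positivity)
  have key : ∀ t s : ℝ, 0 ≤ t → 0 ≤ s → s ≤ t + 1 → β (B'' * s) ≤ β (B' * t) + K := by
    intro t s ht hs hst
    by_cases hc : T ≤ t
    · have h2 : B'' * s ≤ B' * t := by
        have h3 : B'' ≤ t * (B' - B'') := by
          have := (div_le_iff₀ (by linarith : (0:ℝ) < B' - B'')).mp hc
          linarith
        nlinarith
      have := hβm (Set.mem_Ici.mpr (by positivity)) (Set.mem_Ici.mpr (by positivity)) h2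
      linarith
    · push_neg at hc
      have h1 : B'' * s ≤ B'' * (T + 1) := by nlinarith
      have h2 := hβm (Set.mem_Ici.mpr (by positivity)) (Set.mem_Ici.mpr (by positivity)) h1
      have h3 : 0 ≤ β (B' * t) := hβnonneg _ (by positivity)
      simp only [← hK] at h2
      linarith
  refine ⟨N, B'', 1, 2 ^ N * Real.exp (2 * K), hBB'', one_pos, by positivity, ?_⟩
  intro z ζ hζ
  set x : Fin k → ℝ := fun j => (z j).re with hx
  set y : Fin k → ℝ := fun j => (z j).im with hy
  set ξ : Fin k → ℝ := fun j => (ζ j).re with hξ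
  set η : Fin k → ℝ := fun j => (ζ j).im with hη
  have hxz : (fun j => ((z + ζ) j).re : Fin k → ℝ) = x + ξ := by
    funext j; simp [hx, hξ]
  have hyz : (fun j => ((z + ζ) j).im : Fin k → ℝ) = y + η := by
    funext j; simp [hy, hη]
  have hξ1 : ‖ξ‖ ≤ 1 := by
    refine (pi_norm_le_iff_of_nonneg zero_le_one).mpr fun j => ?_
    calc ‖ξ j‖ = |(ζ j).re| := rfl
      _ ≤ ‖ζ j‖ := Complex.abs_re_le_norm _
      _ ≤ ‖ζ‖ := norm_le_pi_norm ζ j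
      _ ≤ 1 := hζ
  have hη1 : ‖η‖ ≤ 1 := by
    refine (pi_norm_le_iff_of_nonneg zero_le_one).mpr fun j => ?_
    calc ‖η j‖ = |(ζ j).im| := rfl
      _ ≤ ‖ζ j‖ := Complex.abs_im_le_norm _
      _ ≤ ‖ζ‖ := norm_le_pi_norm ζ j
      _ ≤ 1 := hζ
  unfold Mnorm
  rw [hxz, hyz]
  -- polynomial part
  have hA : (1 + ‖x‖) ^ N ≤ 2 ^ N * (1 + ‖x + ξ‖) ^ N := by
    have h1 : ‖x‖ ≤ ‖x + ξ‖ + 1 := by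
      have h0 : ‖(x + ξ) - ξ‖ ≤ ‖x + ξ‖ + ‖ξ‖ := norm_sub_le _ _
      rw [add_sub_cancel_right] at h0
      linarith
    have h2 : 1 + ‖x‖ ≤ 2 * (1 + ‖x + ξ‖) := by
      have := norm_nonneg (x + ξ); linarith
    calc (1 + ‖x‖) ^ N ≤ (2 * (1 + ‖x + ξ‖)) ^ N :=
          pow_le_pow_left₀ (by positivity) h2 N
      _ = 2 ^ N * (1 + ‖x + ξ‖) ^ N := mul_pow 2 _ N
  -- exponential part
  have hy' : ‖y + η‖ ≤ ‖y‖ + 1 := le_trans (norm_add_le y η) (by linarith)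
  have hd' : Metric.infDist (x + ξ) U ≤ Metric.infDist x U + 1 := by
    have h1 := Metric.infDist_le_infDist_add_dist (x := x + ξ) (y := x) (s := U)
    have h2 : dist (x + ξ) x = ‖ξ‖ := by
      rw [dist_eq_norm]; simp
    linarith
  have e1 : β (B'' * ‖y + η‖) ≤ β (B' * ‖y‖) + K :=
    key _ _ (norm_nonneg y) (norm_nonneg _) hy'
  have e2 : β (B'' * Metric.infDist (x + ξ) U) ≤ β (B' * Metric.infDist x U) + K :=
    key _ _ Metric.infDist_nonneg Metric.infDist_nonneg hd'
  have hE : Real.exp (-β (B' * ‖y‖) - β (B' * Metric.infDist x U)) ≤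
      Real.exp (2 * K) *
        Real.exp (-β (B'' * ‖y + η‖) - β (B'' * Metric.infDist (x + ξ) U)) := by
    rw [← Real.exp_add]
    exact Real.exp_le_exp.mpr (by linarith)
  calc (1 + ‖x‖) ^ N * Real.exp (-β (B' * ‖y‖) - β (B' * Metric.infDist x U))
      ≤ (2 ^ N * (1 + ‖x + ξ‖) ^ N) *
        (Real.exp (2 * K) *
          Real.exp (-β (B'' * ‖y + η‖) - β (B'' * Metric.infDist (x + ξ) U))) :=
        mul_le_mul hA hE (Real.exp_pos _).le (by positivity)
    _ = 2 ^ N * Real.exp (2 * K) *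
        ((1 + ‖x + ξ‖) ^ N *
          Real.exp (-β (B'' * ‖y + η‖) - β (B'' * Metric.infDist (x + ξ) U))) := by ring
end
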